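/- arXiv:0912.2026 — 8 statements merged into one kernel-verified Lean document; each statement's English description precedes it below -/
import Mathlib

section
/- Let f and g be nonnegative measurable functions on [0,1] with f integrable, such that log(f/g) is essentially bounded on [0,1]. Then Δ(f;g) ≤ (1/2) · exp(‖log(f/g)‖_∞) · ∫₀¹ f · (log(f/g))² dμ. -/
open MeasureTheory

private lemma hasDerivG (s : ℝ) :
    HasDerivAt (fun s : ℝ => s^2/2 + Real.exp (-s) + s * Real.exp (-s) - 1)
      (s * (1 - Real.exp (-s))) s := by
  have h1 : HasDerivAt (fun s : ℝ => Real.exp (-s)) (-Real.exp (-s)) s := by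
    simpa using (hasDerivAt_neg' s).exp
  have h2 : HasDerivAt (fun s : ℝ => s^2/2) s s := by
    have := (hasDerivAt_pow 2 s).div_const 2
    simpa using this
  have := ((h2.add h1).add ((hasDerivAt_id s).mul h1)).sub_const 1
  refine this.congr_deriv ?_
  simp only [id]
  ring

private lemma aux_nonneg : ∀ s : ℝ, 0 ≤ s →
    0 ≤ s^2/2 + Real.exp (-s) + s * Real.exp (-s) - 1 := by
  intro s hs
  set G : ℝ → ℝ := fun s => s^2/2 + Real.exp (-s) + s * Real.exp (-s) - 1 with hGdef
  have hmono : MonotoneOn G (Set.Ici (0:ℝ)) := by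
    apply monotoneOn_of_deriv_nonneg (convex_Ici 0)
    · exact fun x _ => ((hasDerivG x).continuousAt).continuousWithinAt
    · exact fun x _ => ((hasDerivG x).differentiableAt).differentiableWithinAt
    · intro x hx
      rw [(hasDerivG x).deriv]
      have hx0 : 0 ≤ x := le_of_lt (by simpa using hx)
      have : Real.exp (-x) ≤ 1 := Real.exp_le_one_iff.mpr (by linarith)
      nlinarith
  have h0 : G 0 = 0 := by simp [hGdef]
  have := hmono (Set.self_mem_Ici) (Set.mem_Ici.mpr hs) hs
  rw [h0] at this
  simpa [hGdef] using this

private lemma exp_quad_bound_nonneg {s : ℝ} (hs : 0 ≤ s) :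
    Real.exp s - 1 - s ≤ s^2/2 * Real.exp s := by
  have h := aux_nonneg s hs
  have he : Real.exp (-s) * Real.exp s = 1 := by
    rw [← Real.exp_add]; simp
  nlinarith [Real.exp_pos s]

private lemma exp_quad_bound (t : ℝ) :
    Real.exp t - 1 - t ≤ t^2/2 * Real.exp |t| := by
  rcases le_or_gt 0 t with ht | ht
  · rw [abs_of_nonneg ht]; exact exp_quad_bound_nonneg ht
  · set s := -t with hsdef
    have hs : 0 < s := by simp [hsdef]; linarith
    rw [abs_of_neg ht]
    have hsinh : s ≤ Real.sinh s := Real.self_le_sinh_iff.mpr hs.le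
    rw [Real.sinh_eq] at hsinh
    have h1 : Real.exp (-s) - 1 + s ≤ Real.exp s - 1 - s := by linarith
    have h2 := exp_quad_bound_nonneg hs.le
    have : Real.exp (-s) - 1 + s ≤ s^2/2 * Real.exp s := le_trans h1 h2
    have hts : t = -s := by simp [hsdef]
    rw [hts]
    simpa using this

/-- The generalized Kullback–Leibler divergence
`Δ(f;g) = ∫₀¹ (f log(f/g) − f + g) dμ`, `μ` the Lebesgue measure on `[0,1]`. -/
noncomputable def KLdiv (f g : ℝ → ℝ) : ℝ :=
  ∫ x in Set.Icc (0:ℝ) 1, (f x * Real.log (f x / g x) - f x + g x)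

/-- if `f, g` are nonnegative measurable functions on `[0,1]`
(positive a.e., so that the ratio `f/g` makes sense), `f` is integrable and
`log(f/g)` is essentially bounded on `[0,1]`, then
`Δ(f;g) ≤ (1/2) exp(‖log(f/g)‖_∞) ∫₀¹ f (log(f/g))² dμ`. -/
theorem stmt_1 (f g : ℝ → ℝ) (hf : Measurable f) (hg : Measurable g)
    (hfnn : ∀ x, 0 ≤ f x) (hgnn : ∀ x, 0 ≤ g x)
    (hfpos : ∀ᵐ x ∂(volume.restrict (Set.Icc (0:ℝ) 1)), 0 < f x)
    (hgpos : ∀ᵐ x ∂(volume.restrict (Set.Icc (0:ℝ) 1)), 0 < g x)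
    (hfint : IntegrableOn f (Set.Icc (0:ℝ) 1))
    (hbdd : MemLp (fun x => Real.log (f x / g x)) ⊤ (volume.restrict (Set.Icc (0:ℝ) 1))) :
    KLdiv f g ≤ (1/2) *
        Real.exp ((eLpNorm (fun x => Real.log (f x / g x)) ⊤
          (volume.restrict (Set.Icc (0:ℝ) 1))).toReal) *
        ∫ x in Set.Icc (0:ℝ) 1, f x * (Real.log (f x / g x))^2 := by
  set μ := volume.restrict (Set.Icc (0:ℝ) 1) with hμ
  set L : ℝ → ℝ := fun x => Real.log (f x / g x) with hL
  set M : ℝ := (eLpNorm L ⊤ μ).toReal with hM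
  have hLmeas : Measurable L := Real.measurable_log.comp (hf.div hg)
  have hMnn : 0 ≤ M := ENNReal.toReal_nonneg
  -- a.e. bound |L x| ≤ M
  have hlt : eLpNorm L ⊤ μ < ⊤ := hbdd.2
  have haeM : ∀ᵐ x ∂μ, |L x| ≤ M := by
    filter_upwards [ae_le_eLpNormEssSup (f := L) (μ := μ)] with x hx
    have h1 : (‖L x‖₊ : ENNReal) ≤ eLpNorm L ⊤ μ := by rwa [eLpNorm_exponent_top]
    have h2 := ENNReal.toReal_mono hlt.ne h1
    simpa [Real.norm_eq_abs, hM] using h2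
  -- a.e. identity exp(-L x) = g x / f x, hence f x * exp (-L x) = g x
  have haeg : ∀ᵐ x ∂μ, g x = f x * Real.exp (-(L x)) := by
    filter_upwards [hfpos, hgpos] with x hfx hgx
    have hfg : 0 < f x / g x := div_pos hfx hgx
    have : Real.exp (-(L x)) = g x / f x := by
      rw [hL]
      simp only [← Real.log_inv]
      rw [Real.exp_log (by positivity), inv_div]
    rw [this]
    field_simp
  -- pointwise a.e. bounds
  have hkey : ∀ᵐ x ∂μ,
      f x * L x - f x + g x ≤ 1/2 * Real.exp M * (f x * (L x)^2) ∧
      0 ≤ f x * L x - f x + g x := by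
    filter_upwards [hfpos, haeM, haeg] with x hfx hMx hgx
    rw [hgx]
    constructor
    · have h1 : Real.exp (-(L x)) - 1 - (-(L x)) ≤ (L x)^2/2 * Real.exp |L x| := by
        simpa using exp_quad_bound (-(L x))
      have h2 : Real.exp |L x| ≤ Real.exp M := Real.exp_le_exp.mpr hMx
      have h3 : Real.exp (-(L x)) - 1 + L x ≤ (L x)^2/2 * Real.exp M := by
        nlinarith [sq_nonneg (L x)]
      nlinarith
    · have := Real.add_one_le_exp (-(L x))
      nlinarith
  -- integrability
  have hfLmeas : AEStronglyMeasurable (fun x => f x * (L x)^2) μ :=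
    (hf.mul (hLmeas.pow_const 2)).aestronglyMeasurable
  have hint2 : Integrable (fun x => f x * (L x)^2) μ := by
    refine Integrable.mono' (hfint.mul_const (M^2)) hfLmeas ?_
    filter_upwards [haeM] with x hx
    rw [Real.norm_eq_abs, abs_of_nonneg (mul_nonneg (hfnn x) (sq_nonneg _))]
    have : (L x)^2 ≤ M^2 := by nlinarith [abs_nonneg (L x), sq_abs (L x)]
    nlinarith [hfnn x]
  have hint2' : Integrable (fun x => 1/2 * Real.exp M * (f x * (L x)^2)) μ :=
    hint2.const_mul _
  have hint1 : Integrable (fun x => f x * L x - f x + g x) μ := by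
    refine Integrable.mono' hint2' ?_ ?_
    · exact ((hf.mul hLmeas).sub hf |>.add hg).aestronglyMeasurable
    · filter_upwards [hkey] with x ⟨h1, h2⟩
      rw [Real.norm_eq_abs, abs_of_nonneg h2]
      exact h1
  -- conclude
  have hmono := integral_mono_ae hint1 hint2' (hkey.mono fun x hx => hx.1)
  rw [KLdiv]
  calc ∫ x in Set.Icc (0:ℝ) 1, (f x * Real.log (f x / g x) - f x + g x)
      ≤ ∫ x in Set.Icc (0:ℝ) 1, 1/2 * Real.exp M * (f x * (L x)^2) := hmono
    _ = 1/2 * Real.exp M * ∫ x in Set.Icc (0:ℝ) 1, f x * (L x)^2 := by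
        rw [integral_const_mul]
    _ = _ := by rw [mul_assoc]
end

section
/- Let f and g be measurable functions on [0,1] such that 0 < f ≤ M₁ almost everywhere for a constant M₁ > 0, g is positive almost everywhere, and log(f/g) is essentially bounded. Then ∫₀¹ (f − g)² dμ ≤ M₁ · exp(2‖log(f/g)‖_∞) · ∫₀¹ f · (log(f/g))² dμ. -/
open MeasureTheory

lemma abs_one_sub_exp_le (s : ℝ) : |1 - Real.exp s| ≤ |s| * Real.exp |s| := by
  rcases le_or_gt 0 s with h | h
  · rw [abs_of_nonpos (by nlinarith [Real.add_one_le_exp s]), abs_of_nonneg h]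
    have h1 : -s + 1 ≤ Real.exp (-s) := Real.add_one_le_exp (-s)
    have h2 : Real.exp (-s) * Real.exp s = 1 := by
      rw [← Real.exp_add]; simp
    nlinarith [Real.exp_pos s]
  · rw [abs_of_nonneg (by nlinarith [Real.exp_pos s, Real.exp_lt_one_iff.mpr h] : (0:ℝ) ≤ 1 - Real.exp s),
      abs_of_neg h]
    have h1 : s + 1 ≤ Real.exp s := Real.add_one_le_exp s
    have h2 : 1 ≤ Real.exp (-s) := Real.one_le_exp (by linarith)
    nlinarith

/-- if `0 < f ≤ M₁` a.e. on `[0,1]`, `g > 0` a.e. and `log(f/g)` is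
essentially bounded, then
`∫₀¹ (f − g)² dμ ≤ M₁ exp(2‖log(f/g)‖_∞) ∫₀¹ f (log(f/g))² dμ`. -/
theorem stmt_2 (f g : ℝ → ℝ) (hf : Measurable f) (hg : Measurable g)
    (M₁ : ℝ) (hM₁ : 0 < M₁)
    (hfpos : ∀ᵐ x ∂(volume.restrict (Set.Icc (0:ℝ) 1)), 0 < f x ∧ f x ≤ M₁)
    (hgpos : ∀ᵐ x ∂(volume.restrict (Set.Icc (0:ℝ) 1)), 0 < g x)
    (hbdd : MemLp (fun x => Real.log (f x / g x)) ⊤ (volume.restrict (Set.Icc (0:ℝ) 1))) :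
    ∫ x in Set.Icc (0:ℝ) 1, (f x - g x)^2 ≤
      M₁ * Real.exp (2 * (eLpNorm (fun x => Real.log (f x / g x)) ⊤
          (volume.restrict (Set.Icc (0:ℝ) 1))).toReal) *
        ∫ x in Set.Icc (0:ℝ) 1, f x * (Real.log (f x / g x))^2 := by
  set μr := volume.restrict (Set.Icc (0:ℝ) 1) with hμr
  set L := (eLpNorm (fun x => Real.log (f x / g x)) ⊤ μr).toReal with hL
  have hL0 : 0 ≤ L := ENNReal.toReal_nonneg
  set C := M₁ * Real.exp (2 * L) with hC
  have hC0 : 0 < C := mul_pos hM₁ (Real.exp_pos _)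
  -- a.e. bound on log
  have hae : ∀ᵐ x ∂μr, |Real.log (f x / g x)| ≤ L := by
    have h1 := ae_le_eLpNormEssSup (f := fun x => Real.log (f x / g x)) (μ := μr)
    have hfin : eLpNormEssSup (fun x => Real.log (f x / g x)) μr < ⊤ := by
      rw [← eLpNorm_exponent_top]; exact hbdd.2
    filter_upwards [h1] with x hx
    have : (‖Real.log (f x / g x)‖₊ : ENNReal).toReal ≤
        (eLpNormEssSup (fun x => Real.log (f x / g x)) μr).toReal :=
      ENNReal.toReal_mono hfin.ne hx
    simpa [hL, eLpNorm_exponent_top, Real.norm_eq_abs] using this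
  -- pointwise key inequality
  have hpt : ∀ᵐ x ∂μr, (f x - g x)^2 ≤ C * (f x * (Real.log (f x / g x))^2) := by
    filter_upwards [hfpos, hgpos, hae] with x ⟨hf0, hfM⟩ hg0 hlx
    set t := Real.log (f x / g x) with ht
    have hfg : f x / g x = Real.exp t := (Real.exp_log (div_pos hf0 hg0)).symm
    have hgx : g x = f x * Real.exp (-t) := by
      have : f x = g x * Real.exp t := by
        field_simp at hfg; linarith [hfg]
      rw [this, Real.exp_neg]
      field_simp
    have key : |1 - Real.exp (-t)| ≤ |t| * Real.exp |t| := by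
      simpa [abs_neg] using abs_one_sub_exp_le (-t)
    have h1 : (f x - g x)^2 = (f x)^2 * (1 - Real.exp (-t))^2 := by
      rw [hgx]; ring
    have h2 : (1 - Real.exp (-t))^2 ≤ (|t| * Real.exp |t|)^2 := by
      have := sq_le_sq' (by linarith [abs_nonneg (1 - Real.exp (-t)), neg_abs_le (1 - Real.exp (-t))]) (le_trans (le_abs_self _) key)
      exact this
    have hexp : Real.exp |t| ≤ Real.exp L := Real.exp_le_exp.mpr hlx
    have hexp2 : (Real.exp |t|)^2 ≤ Real.exp (2 * L) := by
      rw [← Real.exp_nat_mul]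
      have : Real.exp (2 * |t|) ≤ Real.exp (2 * L) :=
        Real.exp_le_exp.mpr (by linarith)
      simpa [two_mul, Real.exp_add] using
        (by nlinarith [Real.exp_pos |t|, Real.exp_pos L, hexp] :
          Real.exp |t| * Real.exp |t| ≤ Real.exp L * Real.exp L)
    have : (f x - g x)^2 ≤ (f x)^2 * (t^2 * Real.exp (2*L)) := by
      have h3 : (|t| * Real.exp |t|)^2 = t^2 * (Real.exp |t|)^2 := by
        rw [mul_pow, sq_abs]
      have h4 : (1 - Real.exp (-t))^2 ≤ t^2 * Real.exp (2*L) :=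
        (h2.trans_eq h3).trans (mul_le_mul_of_nonneg_left hexp2 (sq_nonneg t))
      rw [h1]
      exact mul_le_mul_of_nonneg_left h4 (sq_nonneg _)
    calc (f x - g x)^2 ≤ (f x)^2 * (t^2 * Real.exp (2*L)) := this
      _ ≤ M₁ * Real.exp (2*L) * (f x * t^2) := by nlinarith [sq_nonneg t, Real.exp_pos (2*L)]
  -- integrability
  have hmeas2 : AEStronglyMeasurable (fun x => f x * (Real.log (f x / g x))^2) μr :=
    ((hf.mul (((hf.div hg).log).pow_const 2))).aestronglyMeasurable
  have hfinmeas : μr Set.univ < ⊤ := by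
    rw [hμr, Measure.restrict_apply_univ]
    exact (measure_Icc_lt_top)
  have hint2 : Integrable (fun x => f x * (Real.log (f x / g x))^2) μr := by
    apply Integrable.mono' (g := fun _ => M₁ * L^2)
    · rw [hμr]; exact integrableOn_const measure_Icc_lt_top.ne
    · exact hmeas2
    · filter_upwards [hfpos, hae] with x ⟨hf0, hfM⟩ hlx
      rw [Real.norm_eq_abs, abs_mul, abs_of_pos hf0, abs_pow, sq_abs]
      have : (Real.log (f x / g x))^2 ≤ L^2 := by
        rw [← sq_abs]; exact pow_le_pow_left₀ (abs_nonneg _) hlx 2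
      nlinarith
  have hint1 : Integrable (fun x => (f x - g x)^2) μr := by
    apply Integrable.mono' (g := fun _ => C * (M₁ * L^2))
    · rw [hμr]; exact integrableOn_const measure_Icc_lt_top.ne
    · exact ((hf.sub hg).pow_const 2).aestronglyMeasurable
    · filter_upwards [hpt, hfpos, hae] with x hx ⟨hf0, hfM⟩ hlx
      rw [Real.norm_eq_abs, abs_of_nonneg (sq_nonneg _)]
      have h2 : (Real.log (f x / g x))^2 ≤ L^2 := by
        rw [← sq_abs]; exact pow_le_pow_left₀ (abs_nonneg _) hlx 2
      have : f x * (Real.log (f x / g x))^2 ≤ M₁ * L^2 := by nlinarith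
      nlinarith
  calc ∫ x in Set.Icc (0:ℝ) 1, (f x - g x)^2
      ≤ ∫ x in Set.Icc (0:ℝ) 1, C * (f x * (Real.log (f x / g x))^2) :=
        integral_mono_ae hint1 (hint2.const_mul C) hpt
    _ = C * ∫ x in Set.Icc (0:ℝ) 1, f x * (Real.log (f x / g x))^2 :=
        integral_const_mul C _
end

section
/- Let ψ₁,…,ψ_m be bounded measurable functions on [0,1] and let β ∈ ℝ^m. Suppose there exists θ(β) ∈ ℝ^m such that ∫₀¹ f_{θ(β)} ψ_i dμ = β_i for all i = 1,…,m. Then for any nonnegative integrable function f on [0,1] with f·log f integrable and ∫₀¹ f ψ_i dμ = β_i for all i, and for every θ ∈ ℝ^m, the Pythagorean-like identity Δ(f; f_θ) = Δ(f; f_{θ(β)}) + Δ(f_{θ(β)}; f_θ) holds. -/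
open MeasureTheory

/-- The exponential family member `f_θ = exp(Σ_{i} θ_i ψ_i)`. -/
noncomputable def expFam {m : ℕ} (ψ : Fin m → ℝ → ℝ) (θ : Fin m → ℝ) : ℝ → ℝ :=
  fun x => Real.exp (∑ i, θ i * ψ i x)

lemma integrableOn_of_bdd {g : ℝ → ℝ} (hg : Measurable g) (C : ℝ)
    (hC : ∀ x, |g x| ≤ C) : IntegrableOn g (Set.Icc (0:ℝ) 1) := by
  have : IsFiniteMeasure (volume.restrict (Set.Icc (0:ℝ) 1)) := by
    constructor
    rw [Measure.restrict_apply_univ]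
    simp [Real.volume_Icc]
  exact ⟨hg.aestronglyMeasurable,
    HasFiniteIntegral.of_bounded (C := C)
      (Filter.Eventually.of_forall fun x => by simpa using hC x)⟩

lemma expFam_meas {m : ℕ} (ψ : Fin m → ℝ → ℝ) (hψmeas : ∀ i, Measurable (ψ i))
    (θ : Fin m → ℝ) : Measurable (expFam ψ θ) :=
  Real.measurable_exp.comp (Finset.measurable_sum _ fun i _ => (hψmeas i).const_mul _)

lemma sum_bound {m : ℕ} (ψ : Fin m → ℝ → ℝ) (C : Fin m → ℝ)
    (hC : ∀ i x, |ψ i x| ≤ C i) (θ : Fin m → ℝ) (x : ℝ) :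
    |∑ i, θ i * ψ i x| ≤ ∑ i, |θ i| * C i := by
  calc |∑ i, θ i * ψ i x| ≤ ∑ i, |θ i * ψ i x| := Finset.abs_sum_le_sum_abs _ _
    _ ≤ ∑ i, |θ i| * C i := by
        apply Finset.sum_le_sum
        intro i _
        rw [abs_mul]
        exact mul_le_mul_of_nonneg_left (hC i x) (abs_nonneg _)

/-- Key expansion lemma. -/
lemma KL_expand {m : ℕ} (ψ : Fin m → ℝ → ℝ)
    (hψmeas : ∀ i, Measurable (ψ i)) (hψbdd : ∀ i, ∃ C, ∀ x, |ψ i x| ≤ C)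
    (f : ℝ → ℝ) (hfint : IntegrableOn f (Set.Icc (0:ℝ) 1))
    (hflogf : IntegrableOn (fun x => f x * Real.log (f x)) (Set.Icc (0:ℝ) 1))
    (θ : Fin m → ℝ) :
    KLdiv f (expFam ψ θ)
      = (∫ x in Set.Icc (0:ℝ) 1, f x * Real.log (f x))
        - (∑ i, θ i * ∫ x in Set.Icc (0:ℝ) 1, f x * ψ i x)
        - (∫ x in Set.Icc (0:ℝ) 1, f x)
        + (∫ x in Set.Icc (0:ℝ) 1, expFam ψ θ x) := by
  choose C hC using hψbdd
  have hfψ : ∀ i : Fin m, IntegrableOn (fun x => θ i * (f x * ψ i x)) (Set.Icc (0:ℝ) 1) := by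
    intro i
    have : IntegrableOn (fun x => ψ i x * f x) (Set.Icc (0:ℝ) 1) :=
      hfint.bdd_mul (hψmeas i).aestronglyMeasurable (c := C i) (Filter.Eventually.of_forall fun x => by simpa using hC i x)
    exact (this.const_mul (θ i)).congr (Filter.Eventually.of_forall fun x => by ring)
  have hsum : IntegrableOn (fun x => ∑ i, θ i * (f x * ψ i x)) (Set.Icc (0:ℝ) 1) :=
    integrable_finset_sum _ fun i _ => hfψ i
  have hexp : IntegrableOn (expFam ψ θ) (Set.Icc (0:ℝ) 1) := by
    apply integrableOn_of_bdd (expFam_meas ψ hψmeas θ) (Real.exp (∑ i, |θ i| * C i))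
    intro x
    unfold expFam
    rw [abs_of_pos (Real.exp_pos _)]
    exact Real.exp_le_exp.2 ((le_abs_self _).trans (sum_bound ψ C hC θ x))
  have hptw : ∀ x, f x * Real.log (f x / expFam ψ θ x) - f x + expFam ψ θ x
      = (f x * Real.log (f x) - (∑ i, θ i * (f x * ψ i x)) - f x) + expFam ψ θ x := by
    intro x
    have h1 : f x * Real.log (f x / expFam ψ θ x)
        = f x * Real.log (f x) - f x * (∑ i, θ i * ψ i x) := by
      rcases eq_or_ne (f x) 0 with h | h
      · simp [h]
      · unfold expFam
        rw [Real.log_div h (Real.exp_ne_zero _), Real.log_exp]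
        ring
    have h2 : f x * (∑ i, θ i * ψ i x) = ∑ i, θ i * (f x * ψ i x) := by
      rw [Finset.mul_sum]; apply Finset.sum_congr rfl; intro i _; ring
    rw [h1, h2]
  have i1 : IntegrableOn (fun x => f x * Real.log (f x) - ∑ i, θ i * (f x * ψ i x))
      (Set.Icc (0:ℝ) 1) := hflogf.sub hsum
  have i2 : IntegrableOn (fun x => f x * Real.log (f x) - (∑ i, θ i * (f x * ψ i x)) - f x)
      (Set.Icc (0:ℝ) 1) := i1.sub hfint
  unfold KLdiv
  rw [integral_congr_ae (Filter.Eventually.of_forall hptw)]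
  rw [integral_add i2 hexp, integral_sub i1 hfint, integral_sub hflogf hsum,
    integral_finset_sum _ (fun i _ => hfψ i)]
  have hmul : ∀ i : Fin m, (∫ a in Set.Icc (0:ℝ) 1, θ i * (f a * ψ i a))
      = θ i * ∫ x in Set.Icc (0:ℝ) 1, f x * ψ i x := fun i => integral_const_mul _ _
  simp_rw [hmul]

/-- Pythagorean-like identity for the information projection onto an
exponential family. -/
theorem stmt_3 {m : ℕ} (ψ : Fin m → ℝ → ℝ)
    (hψmeas : ∀ i, Measurable (ψ i)) (hψbdd : ∀ i, ∃ C, ∀ x, |ψ i x| ≤ C)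
    (β : Fin m → ℝ) (θβ : Fin m → ℝ)
    (hθβ : ∀ i, ∫ x in Set.Icc (0:ℝ) 1, expFam ψ θβ x * ψ i x = β i)
    (f : ℝ → ℝ) (hfmeas : Measurable f) (hfnn : ∀ x, 0 ≤ f x)
    (hfint : IntegrableOn f (Set.Icc (0:ℝ) 1))
    (hflogf : IntegrableOn (fun x => f x * Real.log (f x)) (Set.Icc (0:ℝ) 1))
    (hfβ : ∀ i, ∫ x in Set.Icc (0:ℝ) 1, f x * ψ i x = β i)
    (θ : Fin m → ℝ) :
    KLdiv f (expFam ψ θ) = KLdiv f (expFam ψ θβ) + KLdiv (expFam ψ θβ) (expFam ψ θ) := by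
  choose C hC using hψbdd
  set B := ∑ i, |θβ i| * C i with hB
  have hCnn : ∀ i, 0 ≤ C i := fun i => (abs_nonneg _).trans (hC i 0)
  have hBnn : 0 ≤ B := Finset.sum_nonneg fun i _ => mul_nonneg (abs_nonneg _) (hCnn i)
  have hg := expFam_meas ψ hψmeas θβ
  have hgint : IntegrableOn (expFam ψ θβ) (Set.Icc (0:ℝ) 1) := by
    apply integrableOn_of_bdd hg (Real.exp B)
    intro x
    unfold expFam
    rw [abs_of_pos (Real.exp_pos _)]
    exact Real.exp_le_exp.2 ((le_abs_self _).trans (sum_bound ψ C hC θβ x))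
  have hgloggmeas : Measurable (fun x => expFam ψ θβ x * Real.log (expFam ψ θβ x)) :=
    hg.mul (Real.measurable_log.comp hg)
  have hglogg : IntegrableOn (fun x => expFam ψ θβ x * Real.log (expFam ψ θβ x))
      (Set.Icc (0:ℝ) 1) := by
    apply integrableOn_of_bdd hgloggmeas (Real.exp B * B)
    intro x
    unfold expFam
    rw [abs_mul, abs_of_pos (Real.exp_pos _), Real.log_exp]
    have h1 : |∑ i, θβ i * ψ i x| ≤ B := sum_bound ψ C hC θβ x
    have h2 : Real.exp (∑ i, θβ i * ψ i x) ≤ Real.exp B :=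
      Real.exp_le_exp.2 ((le_abs_self _).trans h1)
    exact mul_le_mul h2 h1 (abs_nonneg _) (Real.exp_pos _).le
  -- moments of expFam θβ
  have hgψ : ∀ i : Fin m, IntegrableOn (fun x => expFam ψ θβ x * ψ i x) (Set.Icc (0:ℝ) 1) := by
    intro i
    have : IntegrableOn (fun x => ψ i x * expFam ψ θβ x) (Set.Icc (0:ℝ) 1) :=
      hgint.bdd_mul (hψmeas i).aestronglyMeasurable (c := C i) (Filter.Eventually.of_forall fun x => by simpa using hC i x)
    exact this.congr (Filter.Eventually.of_forall fun x => by ring)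
  have hL : (∫ x in Set.Icc (0:ℝ) 1, expFam ψ θβ x * Real.log (expFam ψ θβ x))
      = ∑ i, θβ i * β i := by
    have hptw : ∀ x, expFam ψ θβ x * Real.log (expFam ψ θβ x)
        = ∑ i, θβ i * (expFam ψ θβ x * ψ i x) := by
      intro x
      unfold expFam
      rw [Real.log_exp, Finset.mul_sum]
      apply Finset.sum_congr rfl; intro i _; ring
    rw [integral_congr_ae (Filter.Eventually.of_forall hptw),
      integral_finset_sum _ (fun i _ => (hgψ i).const_mul _)]
    apply Finset.sum_congr rfl
    intro i _
    rw [integral_const_mul, hθβ i]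
  have e1 := KL_expand ψ hψmeas (fun i => ⟨C i, hC i⟩) f hfint hflogf θ
  have e2 := KL_expand ψ hψmeas (fun i => ⟨C i, hC i⟩) f hfint hflogf θβ
  have e3 := KL_expand ψ hψmeas (fun i => ⟨C i, hC i⟩) (expFam ψ θβ) hgint hglogg θ
  rw [e1, e2, e3, hL]
  simp only [hfβ, hθβ]
  ring
end

section
/- Let ψ₁,…,ψ_m be bounded measurable functions on [0,1] that are orthonormal in L²([0,1]), and let A < ∞ be a constant such that ‖v‖_∞ ≤ A‖v‖_{L²} for every v in the linear span of ψ₁,…,ψ_m. Let θ₀ ∈ ℝ^m, let β₀ ∈ ℝ^m be defined by β₀,ᵢ = ∫₀¹ f_{θ₀} ψ_i dμ, set b = exp(‖Σᵢ θ₀,ᵢ ψ_i‖_∞) and e = exp(1), and let β̃ ∈ ℝ^m be a vector with ‖β̃ − β₀‖₂ ≤ 1/(2ebA). Then there exists θ(β̃) ∈ ℝ^m with ∫₀¹ f_{θ(β̃)} ψ_i dμ = β̃_i for all i = 1,…,m, and it satisfies: (i) ‖θ(β̃) − θ₀‖₂ ≤ 2eb‖β̃ − β₀‖₂; (ii) ‖log(f_{θ₀}/f_{θ(β̃)})‖_∞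 ≤ 2ebA‖β̃ − β₀‖₂; (iii) Δ(f_{θ₀}; f_{θ(β̃)}) ≤ 2eb‖β̃ − β₀‖₂². -/
open MeasureTheory

/-- Supremum norm of a function over `[0,1]`. -/
noncomputable def supIcc (h : ℝ → ℝ) : ℝ := ⨆ x : Set.Icc (0:ℝ) 1, |h x|

/-- Euclidean norm on `ℝ^m`. -/
noncomputable def euclNorm {m : ℕ} (v : Fin m → ℝ) : ℝ := Real.sqrt (∑ i, v i ^ 2)

open Real Set

namespace Stmt4Aux

lemma volume_I01 : volume (Set.Icc (0:ℝ) 1) = 1 := by simp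

instance : IsFiniteMeasure (volume.restrict (Set.Icc (0:ℝ) 1)) := by
  constructor
  rw [Measure.restrict_apply_univ, volume_I01]
  exact ENNReal.one_lt_top

lemma intOn {f : ℝ → ℝ} (hm : Measurable f) {C : ℝ} (hC : ∀ x, |f x| ≤ C) :
    IntegrableOn f (Set.Icc (0:ℝ) 1) := by
  refine Measure.integrableOn_of_bounded (M := C) (by simp [volume_I01]) hm.aestronglyMeasurable ?_
  exact Filter.Eventually.of_forall fun x => hC x

lemma supIcc_le {h : ℝ → ℝ} {c : ℝ} (hc : 0 ≤ c) (hb : ∀ x ∈ Set.Icc (0:ℝ) 1, |h x| ≤ c) :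
    supIcc h ≤ c :=
  Real.iSup_le (fun x => hb x x.2) hc

lemma le_supIcc {h : ℝ → ℝ} {C : ℝ} (hbdd : ∀ x, |h x| ≤ C) {x : ℝ}
    (hx : x ∈ Set.Icc (0:ℝ) 1) : |h x| ≤ supIcc h :=
  le_ciSup (f := fun y : Set.Icc (0:ℝ) 1 => |h y.1|)
    ⟨C, by rintro r ⟨y, rfl⟩; exact hbdd y⟩ ⟨x, hx⟩

lemma supIcc_nonneg {h : ℝ → ℝ} {C : ℝ} (hbdd : ∀ x, |h x| ≤ C) : 0 ≤ supIcc h :=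
  le_trans (abs_nonneg _) (le_supIcc hbdd (by norm_num : (0:ℝ) ∈ Set.Icc (0:ℝ) 1))

variable {m : ℕ}

lemma euclNorm_eq (v : Fin m → ℝ) :
    euclNorm v = ‖(WithLp.equiv 2 (Fin m → ℝ)).symm v‖ := by
  rw [EuclideanSpace.norm_eq]
  simp [euclNorm, sq_abs]

lemma euclNorm_nonneg (v : Fin m → ℝ) : 0 ≤ euclNorm v := Real.sqrt_nonneg _

lemma euclNorm_sq (v : Fin m → ℝ) : euclNorm v ^ 2 = ∑ i, v i ^ 2 := by
  rw [euclNorm, sq_sqrt]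
  exact Finset.sum_nonneg fun i _ => sq_nonneg _

lemma abs_le_euclNorm (v : Fin m → ℝ) (i : Fin m) : |v i| ≤ euclNorm v := by
  rw [euclNorm, ← Real.sqrt_sq_eq_abs]
  exact Real.sqrt_le_sqrt (Finset.single_le_sum (f := fun j => v j ^ 2)
    (fun j _ => sq_nonneg _) (Finset.mem_univ i))

lemma euclNorm_neg (v : Fin m → ℝ) : euclNorm (-v) = euclNorm v := by
  simp [euclNorm]

lemma euclNorm_smul (t : ℝ) (v : Fin m → ℝ) : euclNorm (t • v) = |t| * euclNorm v := by
  rw [euclNorm_eq, euclNorm_eq]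
  have : (WithLp.equiv 2 (Fin m → ℝ)).symm (t • v)
      = t • (WithLp.equiv 2 (Fin m → ℝ)).symm v := rfl
  rw [this, norm_smul, Real.norm_eq_abs]

lemma euclNorm_add_le (v w : Fin m → ℝ) : euclNorm (v + w) ≤ euclNorm v + euclNorm w := by
  rw [euclNorm_eq, euclNorm_eq, euclNorm_eq]
  exact norm_add_le _ _

lemma cauchy_schwarz (v w : Fin m → ℝ) : ∑ i, v i * w i ≤ euclNorm v * euclNorm w := by
  rw [euclNorm_eq, euclNorm_eq]
  have := real_inner_le_norm ((WithLp.equiv 2 (Fin m → ℝ)).symm v)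
    ((WithLp.equiv 2 (Fin m → ℝ)).symm w)
  rw [PiLp.inner_apply] at this
  simpa [Real.inner_apply, mul_comm] using this

lemma key_ineq (v : ℝ) : v ^ 2 * Real.exp (-|v|) ≤ (Real.exp v - 1) * v := by
  rcases le_or_gt 0 v with hv | hv
  · rw [abs_of_nonneg hv]
    nlinarith [Real.add_one_le_exp v, Real.exp_le_one_iff.2 (neg_nonpos.2 hv),
      Real.exp_pos (-v), sq_nonneg v]
  · rw [abs_of_neg hv]
    have h1 : Real.exp (- -v) = Real.exp v := by ring_nf
    rw [h1]
    have h2 : (1 - v) * Real.exp v ≤ 1 := by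
      have h3 := mul_le_mul_of_nonneg_right (Real.add_one_le_exp (-v)) (Real.exp_pos v).le
      rwa [← Real.exp_add, neg_add_cancel, Real.exp_zero, show (-v+1) = 1 - v by ring] at h3
    nlinarith [h2, Real.exp_pos v]

lemma kl_integrand_nonneg {a c : ℝ} (ha : 0 < a) (hc : 0 < c) :
    0 ≤ a * Real.log (a / c) - a + c := by
  have h := Real.add_one_le_exp (Real.log (c / a))
  rw [Real.exp_log (div_pos hc ha)] at h
  have hlog : Real.log (c / a) = - Real.log (a / c) := by
    rw [Real.log_div hc.ne' ha.ne', Real.log_div ha.ne' hc.ne']; ring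
  rw [hlog] at h
  have h2 := mul_le_mul_of_nonneg_left h ha.le
  rw [mul_div_cancel₀ c ha.ne'] at h2
  nlinarith [h2]


section
variable {m : ℕ} {ψ : Fin m → ℝ → ℝ} {C : Fin m → ℝ}

lemma gMeas (hψmeas : ∀ i, Measurable (ψ i)) (θ : Fin m → ℝ) :
    Measurable (fun x => ∑ i, θ i * ψ i x) :=
  Finset.measurable_sum _ fun i _ => ((hψmeas i).const_mul _)

lemma gBound (hC : ∀ i x, |ψ i x| ≤ C i) (θ : Fin m → ℝ) (x : ℝ) :
    |∑ i, θ i * ψ i x| ≤ ∑ i, |θ i| * C i := by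
  refine (Finset.abs_sum_le_sum_abs _ _).trans (Finset.sum_le_sum fun i _ => ?_)
  rw [abs_mul]
  exact mul_le_mul_of_nonneg_left (hC i x) (abs_nonneg _)

lemma C_nonneg (hC : ∀ i x, |ψ i x| ≤ C i) (i : Fin m) : 0 ≤ C i :=
  (abs_nonneg _).trans (hC i 0)

lemma integral_g_sq (hψmeas : ∀ i, Measurable (ψ i)) (hC : ∀ i x, |ψ i x| ≤ C i)
    (horth : ∀ i j, (∫ x in Set.Icc (0:ℝ) 1, ψ i x * ψ j x) = if i = j then 1 else 0)
    (c : Fin m → ℝ) :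
    (∫ x in Set.Icc (0:ℝ) 1, (∑ i, c i * ψ i x)^2) = ∑ i, c i ^ 2 := by
  have hterm : ∀ i j : Fin m, IntegrableOn (fun x => (c i * c j) * (ψ i x * ψ j x))
      (Set.Icc (0:ℝ) 1) := by
    intro i j
    apply (intOn ((hψmeas i).mul (hψmeas j)) (C := C i * C j) ?_).const_mul
    intro x
    rw [Pi.mul_apply, abs_mul]
    exact mul_le_mul (hC i x) (hC j x) (abs_nonneg _) (C_nonneg hC i)
  have expand : ∀ x : ℝ, (∑ i, c i * ψ i x)^2
      = ∑ i, ∑ j, (c i * c j) * (ψ i x * ψ j x) := by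
    intro x
    rw [sq, Finset.sum_mul_sum]
    exact Finset.sum_congr rfl fun i _ => Finset.sum_congr rfl fun j _ => by ring
  rw [show (fun x => (∑ i, c i * ψ i x)^2)
      = fun x => ∑ i, ∑ j, (c i * c j) * (ψ i x * ψ j x) from funext expand]
  rw [integral_finset_sum _ fun i _ => integrable_finset_sum _ fun j _ => hterm i j]
  refine Finset.sum_congr rfl fun i _ => ?_
  rw [integral_finset_sum _ fun j _ => hterm i j]
  have : ∀ j : Fin m, (∫ x in Set.Icc (0:ℝ) 1, (c i * c j) * (ψ i x * ψ j x))
      = (c i * c j) * if i = j then 1 else 0 := by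
    intro j
    rw [integral_const_mul, horth i j]
  simp only [this, mul_ite, mul_one, mul_zero]
  rw [Finset.sum_ite_eq (Finset.univ) i (fun j => c i * c j)]
  simp [sq]

lemma hasDerivAt_intExp {g0 w : ℝ → ℝ} (hg0 : Measurable g0) (hw : Measurable w)
    {Cg Cw : ℝ} (hCg : ∀ x, |g0 x| ≤ Cg) (hCw : ∀ x, |w x| ≤ Cw) (t0 : ℝ) :
    HasDerivAt (fun t : ℝ => ∫ x in Set.Icc (0:ℝ) 1, Real.exp (g0 x + t * w x))
      (∫ x in Set.Icc (0:ℝ) 1, Real.exp (g0 x + t0 * w x) * w x) t0 := by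
  have hCw0 : 0 ≤ Cw := (abs_nonneg _).trans (hCw 0)
  have hmeas : ∀ t : ℝ, Measurable (fun x => Real.exp (g0 x + t * w x)) :=
    fun t => (hg0.add (hw.const_mul t)).exp
  refine (hasDerivAt_integral_of_dominated_loc_of_deriv_le (s := Metric.ball t0 1) (Metric.ball_mem_nhds t0 one_pos)
    (F' := fun t x => Real.exp (g0 x + t * w x) * w x)
    (bound := fun _ => Real.exp (Cg + (|t0| + 1) * Cw) * Cw)
    (.of_forall fun t => (hmeas t).aestronglyMeasurable)
    (intOn (hmeas t0) (C := Real.exp (Cg + (|t0| + 1) * Cw)) ?_)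
    (((hmeas t0).mul hw).aestronglyMeasurable)
    (.of_forall fun x => ?_) (integrable_const _)
    (.of_forall fun x => ?_)).2
  · intro x
    rw [abs_of_pos (Real.exp_pos _)]
    apply Real.exp_le_exp.2
    have h1 := (abs_le.1 (hCg x)).2
    have h2 : t0 * w x ≤ (|t0| + 1) * Cw := by
      calc t0 * w x ≤ |t0 * w x| := le_abs_self _
        _ = |t0| * |w x| := abs_mul _ _
        _ ≤ (|t0| + 1) * Cw := mul_le_mul (by linarith) (hCw x) (abs_nonneg _) (by positivity)
    linarith
  · intro t ht
    rw [Real.norm_eq_abs, abs_mul, abs_of_pos (Real.exp_pos _)]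
    have hta : |t| ≤ |t0| + 1 := by
      have := mem_ball_iff_norm.1 ht
      calc |t| ≤ |t0| + |t - t0| := by
              have := abs_sub_abs_le_abs_sub t t0; linarith
        _ ≤ |t0| + 1 := by rw [Real.norm_eq_abs] at this; linarith
    refine mul_le_mul ?_ (hCw x) (abs_nonneg _) (Real.exp_pos _).le
    apply Real.exp_le_exp.2
    have h1 := (abs_le.1 (hCg x)).2
    have h2 : t * w x ≤ (|t0| + 1) * Cw := by
      calc t * w x ≤ |t * w x| := le_abs_self _
        _ = |t| * |w x| := abs_mul _ _
        _ ≤ (|t0| + 1) * Cw := mul_le_mul hta (hCw x) (abs_nonneg _) (by positivity)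
    linarith
  · intro t ht
    have hlin : HasDerivAt (fun s : ℝ => g0 x + s * w x) (w x) t := by
      simpa using ((hasDerivAt_id t).mul_const (w x)).const_add (g0 x)
    exact (Real.hasDerivAt_exp (g0 x + t * w x)).comp t hlin

lemma continuous_intExp (hψmeas : ∀ i, Measurable (ψ i)) (hC : ∀ i x, |ψ i x| ≤ C i) :
    Continuous fun θ : Fin m → ℝ => ∫ x in Set.Icc (0:ℝ) 1, Real.exp (∑ i, θ i * ψ i x) := by
  rw [continuous_iff_continuousAt]
  intro θb
  apply continuousAt_of_dominated (bound := fun _ => Real.exp (∑ i, (|θb i| + 1) * C i))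
  · exact .of_forall fun θ => ((gMeas hψmeas θ).exp).aestronglyMeasurable
  · filter_upwards [Metric.ball_mem_nhds θb one_pos] with θ hθ
    refine .of_forall fun x => ?_
    rw [Real.norm_eq_abs, abs_of_pos (Real.exp_pos _)]
    apply Real.exp_le_exp.2
    calc ∑ i, θ i * ψ i x ≤ |∑ i, θ i * ψ i x| := le_abs_self _
      _ ≤ ∑ i, |θ i| * C i := gBound hC θ x
      _ ≤ ∑ i, (|θb i| + 1) * C i := by
          refine Finset.sum_le_sum fun i _ => mul_le_mul_of_nonneg_right ?_ (C_nonneg hC i)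
          have h1 : dist (θ i) (θb i) ≤ dist θ θb := dist_le_pi_dist θ θb i
          have h2 : dist θ θb < 1 := Metric.mem_ball.1 hθ
          rw [Real.dist_eq] at h1
          have h3 := abs_sub_abs_le_abs_sub (θ i) (θb i)
          linarith
  · exact integrable_const _
  · refine .of_forall fun x => ?_
    exact (Real.continuous_exp.comp (continuous_finset_sum _ fun i _ =>
      (continuous_apply i).mul continuous_const)).continuousAt


lemma expFam_meas (hψmeas : ∀ i, Measurable (ψ i)) (θ : Fin m → ℝ) :
    Measurable (expFam ψ θ) := (gMeas hψmeas θ).exp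

lemma expFam_abs_le (hC : ∀ i x, |ψ i x| ≤ C i) (θ : Fin m → ℝ) (x : ℝ) :
    |expFam ψ θ x| ≤ Real.exp (∑ i, |θ i| * C i) := by
  rw [show expFam ψ θ x = Real.exp (∑ i, θ i * ψ i x) from rfl,
    abs_of_pos (Real.exp_pos _)]
  exact Real.exp_le_exp.2 ((le_abs_self _).trans (gBound hC θ x))

lemma expFam_intOn (hψmeas : ∀ i, Measurable (ψ i)) (hC : ∀ i x, |ψ i x| ≤ C i)
    (θ : Fin m → ℝ) : IntegrableOn (expFam ψ θ) (Set.Icc (0:ℝ) 1) :=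
  intOn (expFam_meas hψmeas θ) (expFam_abs_le hC θ)

lemma expFam_mul_intOn (hψmeas : ∀ i, Measurable (ψ i)) (hC : ∀ i x, |ψ i x| ≤ C i)
    {h : ℝ → ℝ} (hm : Measurable h) {D : ℝ} (hD : ∀ x, |h x| ≤ D) (θ : Fin m → ℝ) :
    IntegrableOn (fun x => expFam ψ θ x * h x) (Set.Icc (0:ℝ) 1) := by
  apply intOn ((expFam_meas hψmeas θ).mul hm)
    (C := Real.exp (∑ i, |θ i| * C i) * D)
  intro x
  rw [Pi.mul_apply, abs_mul]
  exact mul_le_mul (expFam_abs_le hC θ x) (hD x) (abs_nonneg _) (Real.exp_pos _).le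

lemma integral_expFam_mul_sum (hψmeas : ∀ i, Measurable (ψ i)) (hC : ∀ i x, |ψ i x| ≤ C i)
    (θ c : Fin m → ℝ) :
    (∫ x in Set.Icc (0:ℝ) 1, expFam ψ θ x * (∑ i, c i * ψ i x))
      = ∑ i, c i * ∫ x in Set.Icc (0:ℝ) 1, expFam ψ θ x * ψ i x := by
  have : (fun x => expFam ψ θ x * (∑ i, c i * ψ i x))
      = fun x => ∑ i, c i * (expFam ψ θ x * ψ i x) := by
    funext x
    rw [Finset.mul_sum]
    exact Finset.sum_congr rfl fun i _ => by ring
  rw [this, integral_finset_sum _ fun i _ =>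
    ((expFam_mul_intOn hψmeas hC (hψmeas i) (hC i) θ).const_mul _)]
  exact Finset.sum_congr rfl fun i _ => integral_const_mul _ _

lemma hasDerivAt_expFam_line (hψmeas : ∀ i, Measurable (ψ i)) (hC : ∀ i x, |ψ i x| ≤ C i)
    (θ' c : Fin m → ℝ) :
    HasDerivAt (fun t : ℝ => ∫ x in Set.Icc (0:ℝ) 1, expFam ψ (θ' + t • c) x)
      (∑ i, c i * ∫ x in Set.Icc (0:ℝ) 1, expFam ψ θ' x * ψ i x) 0 := by
  have key := hasDerivAt_intExp (g0 := fun x => ∑ i, θ' i * ψ i x)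
    (w := fun x => ∑ i, c i * ψ i x) (gMeas hψmeas θ') (gMeas hψmeas c)
    (gBound hC θ') (gBound hC c) 0
  have hfun : (fun t : ℝ => ∫ x in Set.Icc (0:ℝ) 1, expFam ψ (θ' + t • c) x)
      = fun t : ℝ => ∫ x in Set.Icc (0:ℝ) 1,
          Real.exp ((∑ i, θ' i * ψ i x) + t * ∑ i, c i * ψ i x) := by
    funext t
    congr 1
    funext x
    show Real.exp (∑ i, (θ' i + t * c i) * ψ i x) = _
    congr 1
    rw [Finset.mul_sum, ← Finset.sum_add_distrib]
    exact Finset.sum_congr rfl fun i _ => by ring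
  rw [hfun]
  have hval : (∫ x in Set.Icc (0:ℝ) 1,
        Real.exp ((∑ i, θ' i * ψ i x) + 0 * ∑ i, c i * ψ i x) * (∑ i, c i * ψ i x))
      = ∑ i, c i * ∫ x in Set.Icc (0:ℝ) 1, expFam ψ θ' x * ψ i x := by
    rw [← integral_expFam_mul_sum hψmeas hC θ' c]
    congr 1
    funext x
    simp [expFam]
  rw [← hval]
  exact key

end
end Stmt4Aux

open Stmt4Aux Real Set

/-- existence and stability of the information projection onto an
exponential family (Barron–Sheu type lemma). -/
theorem stmt_4 {m : ℕ} (ψ : Fin m → ℝ → ℝ)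
    (hψmeas : ∀ i, Measurable (ψ i)) (hψbdd : ∀ i, ∃ C, ∀ x, |ψ i x| ≤ C)
    (horth : ∀ i j, (∫ x in Set.Icc (0:ℝ) 1, ψ i x * ψ j x) = if i = j then 1 else 0)
    (A : ℝ)
    (hA : ∀ c : Fin m → ℝ, supIcc (fun x => ∑ i, c i * ψ i x)
      ≤ A * Real.sqrt (∫ x in Set.Icc (0:ℝ) 1, (∑ i, c i * ψ i x)^2))
    (θ₀ β₀ : Fin m → ℝ)
    (hβ₀ : ∀ i, β₀ i = ∫ x in Set.Icc (0:ℝ) 1, expFam ψ θ₀ x * ψ i x)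
    (b : ℝ) (hb : b = Real.exp (supIcc (fun x => ∑ i, θ₀ i * ψ i x)))
    (βt : Fin m → ℝ)
    (hβt : euclNorm (βt - β₀) ≤ 1 / (2 * Real.exp 1 * b * A)) :
    ∃ θβt : Fin m → ℝ,
      (∀ i, (∫ x in Set.Icc (0:ℝ) 1, expFam ψ θβt x * ψ i x) = βt i) ∧
      euclNorm (θβt - θ₀) ≤ 2 * Real.exp 1 * b * euclNorm (βt - β₀) ∧
      supIcc (fun x => Real.log (expFam ψ θ₀ x / expFam ψ θβt x))
        ≤ 2 * Real.exp 1 * b * A * euclNorm (βt - β₀) ∧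
      KLdiv (expFam ψ θ₀) (expFam ψ θβt) ≤ 2 * Real.exp 1 * b * (euclNorm (βt - β₀))^2 := by
  classical
  choose C hC using hψbdd
  rcases Nat.eq_zero_or_pos m with hm0 | hm
  · subst hm0
    refine ⟨θ₀, fun i => i.elim0, ?_, ?_, ?_⟩
    · simp [euclNorm]
    · have h1 : (fun x : ℝ => Real.log (expFam ψ θ₀ x / expFam ψ θ₀ x))
          = fun _ : ℝ => (0:ℝ) := by
        funext x
        have hne : expFam ψ θ₀ x ≠ 0 := (Real.exp_pos _).ne'
        rw [div_self hne, Real.log_one]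
      rw [h1]
      have h2 : supIcc (fun _ : ℝ => (0:ℝ)) = 0 := by
        simp [supIcc]
      rw [h2]
      simp [euclNorm]
    · have h1 : (fun x => expFam ψ θ₀ x * Real.log (expFam ψ θ₀ x / expFam ψ θ₀ x)
          - expFam ψ θ₀ x + expFam ψ θ₀ x) = fun _ : ℝ => (0:ℝ) := by
        funext x
        have hne : expFam ψ θ₀ x ≠ 0 := (Real.exp_pos _).ne'
        rw [div_self hne, Real.log_one]
        ring
      rw [KLdiv, h1, integral_zero]
      simp [euclNorm]
  -- main case
  have hbpos : 0 < b := hb ▸ Real.exp_pos _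
  have epos : (0:ℝ) < Real.exp 1 := Real.exp_pos 1
  have hδnn : 0 ≤ euclNorm (βt - β₀) := euclNorm_nonneg _
  set δ := euclNorm (βt - β₀) with hδ
  -- A ≥ 1
  have hA1 : 1 ≤ A := by
    have i : Fin m := ⟨0, hm⟩
    have h3 : (∫ x in Set.Icc (0:ℝ) 1, (∑ j, (fun k => if k = i then (1:ℝ) else 0) j * ψ j x) ^ 2) = 1 := by
      rw [integral_g_sq hψmeas hC horth]
      simp
    have h2 : (fun x => ∑ j, (fun k => if k = i then (1:ℝ) else 0) j * ψ j x) = ψ i := by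
      funext x
      simp
    have h1 := hA (fun k => if k = i then (1:ℝ) else 0)
    rw [h3, Real.sqrt_one, mul_one, h2] at h1
    have h4 : (1:ℝ) ≤ supIcc (ψ i) := by
      have h5 : (∫ x in Set.Icc (0:ℝ) 1, ψ i x * ψ i x) = 1 := by
        rw [horth i i, if_pos rfl]
      have h6 : (∫ x in Set.Icc (0:ℝ) 1, ψ i x * ψ i x)
          ≤ ∫ _x in Set.Icc (0:ℝ) 1, supIcc (ψ i) ^ 2 := by
        apply setIntegral_mono_on
        · exact intOn ((hψmeas i).mul (hψmeas i)) (C := C i * C i) fun x => by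
            rw [abs_mul]
            exact mul_le_mul (hC i x) (hC i x) (abs_nonneg _) (C_nonneg hC i)
        · exact integrableOn_const (by simp [volume_I01]) (by simp)
        · exact measurableSet_Icc
        · intro x hx
          have h7 := le_supIcc (hC i) hx
          nlinarith [abs_nonneg (ψ i x), sq_abs (ψ i x)]
      rw [h5, setIntegral_const, measureReal_def, volume_I01] at h6
      simp only [ENNReal.toReal_one, one_smul] at h6
      nlinarith [supIcc_nonneg (hC i)]
    linarith
  have hApos : (0:ℝ) < A := lt_of_lt_of_le one_pos hA1
  -- lower bound on f₀
  have hf0_lb : ∀ x ∈ Set.Icc (0:ℝ) 1, 1 / b ≤ expFam ψ θ₀ x := by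
    intro x hx
    have h1 : |∑ i, θ₀ i * ψ i x| ≤ supIcc (fun x => ∑ i, θ₀ i * ψ i x) :=
      le_supIcc (gBound hC θ₀) hx
    rw [hb, one_div, ← Real.exp_neg]
    exact Real.exp_le_exp.2 (by have := (abs_le.1 h1).1; linarith)
  -- the objective function
  set L : (Fin m → ℝ) → ℝ :=
    fun θ => (∫ x in Set.Icc (0:ℝ) 1, expFam ψ θ x) - ∑ i, βt i * θ i with hL
  have hLcont : Continuous L := by
    rw [hL]
    have h1 : (fun θ : Fin m → ℝ => ∫ x in Set.Icc (0:ℝ) 1, expFam ψ θ x)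
        = fun θ : Fin m → ℝ => ∫ x in Set.Icc (0:ℝ) 1, Real.exp (∑ i, θ i * ψ i x) := rfl
    exact (h1 ▸ continuous_intExp hψmeas hC).sub
      (continuous_finset_sum _ fun i _ => continuous_const.mul (continuous_apply i))
  -- monotonicity of the moment map
  have mono : ∀ θ' : Fin m → ℝ, A * euclNorm (θ' - θ₀) ≤ 1 →
      euclNorm (θ' - θ₀) ^ 2 / (b * Real.exp 1)
        ≤ ∑ i, (θ' i - θ₀ i) *
            ((∫ x in Set.Icc (0:ℝ) 1, expFam ψ θ' x * ψ i x) - β₀ i) := by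
    intro θ' hsmall
    have hgint : (∫ x in Set.Icc (0:ℝ) 1, (∑ i, (θ' - θ₀) i * ψ i x) ^ 2)
        = ∑ i, (θ' - θ₀) i ^ 2 := integral_g_sq hψmeas hC horth _
    have hvle : ∀ x ∈ Set.Icc (0:ℝ) 1, |∑ i, (θ' - θ₀) i * ψ i x| ≤ 1 := by
      intro x hx
      have h1 := le_supIcc (gBound hC (θ' - θ₀)) hx
      have h2 := hA (θ' - θ₀)
      rw [hgint] at h2
      have h3 : Real.sqrt (∑ i, (θ' - θ₀) i ^ 2) = euclNorm (θ' - θ₀) := rfl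
      rw [h3] at h2
      linarith
    have hpt : ∀ x ∈ Set.Icc (0:ℝ) 1,
        (∑ i, (θ' - θ₀) i * ψ i x) ^ 2 / (b * Real.exp 1)
          ≤ (expFam ψ θ' x - expFam ψ θ₀ x) * (∑ i, (θ' - θ₀) i * ψ i x) := by
      intro x hx
      set w := ∑ i, (θ' - θ₀) i * ψ i x with hw
      have hsplit : expFam ψ θ' x = expFam ψ θ₀ x * Real.exp w := by
        rw [hw, show expFam ψ θ' x = Real.exp (∑ i, θ' i * ψ i x) from rfl,
          show expFam ψ θ₀ x = Real.exp (∑ i, θ₀ i * ψ i x) from rfl, ← Real.exp_add]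
        congr 1
        rw [← Finset.sum_add_distrib]
        exact Finset.sum_congr rfl fun i _ => by simp only [Pi.sub_apply]; ring
      have k1 := key_ineq w
      have k2 : Real.exp (-(1:ℝ)) ≤ Real.exp (-|w|) := by
        apply Real.exp_le_exp.2
        have h4 := hvle x hx
        rw [← hw] at h4
        linarith
      have k3 := hf0_lb x hx
      have k4 : 0 ≤ (Real.exp w - 1) * w :=
        le_trans (mul_nonneg (sq_nonneg _) (Real.exp_pos _).le) k1
      have e1 : w ^ 2 * Real.exp (-(1:ℝ)) ≤ (Real.exp w - 1) * w :=
        le_trans (mul_le_mul_of_nonneg_left k2 (sq_nonneg _)) k1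
      have e2 : (1 / b) * ((Real.exp w - 1) * w)
          ≤ expFam ψ θ₀ x * ((Real.exp w - 1) * w) :=
        mul_le_mul_of_nonneg_right k3 k4
      have e3 : (1 / b) * (w ^ 2 * Real.exp (-(1:ℝ)))
          ≤ (1 / b) * ((Real.exp w - 1) * w) :=
        mul_le_mul_of_nonneg_left e1 (by positivity)
      have e4 : w ^ 2 / (b * Real.exp 1) = (1 / b) * (w ^ 2 * Real.exp (-(1:ℝ))) := by
        rw [Real.exp_neg]
        field_simp
      have e5 : (expFam ψ θ₀ x * Real.exp w - expFam ψ θ₀ x) * w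
          = expFam ψ θ₀ x * ((Real.exp w - 1) * w) := by ring
      rw [hsplit, e4, e5]
      exact le_trans e3 e2
    have hLint : IntegrableOn
        (fun x => (∑ i, (θ' - θ₀) i * ψ i x) ^ 2 / (b * Real.exp 1))
        (Set.Icc (0:ℝ) 1) := by
      refine Integrable.div_const ?_ _
      apply intOn ((gMeas hψmeas (θ' - θ₀)).pow measurable_const)
        (C := (∑ i, |(θ' - θ₀) i| * C i) ^ 2)
      intro x
      rw [abs_pow]
      exact pow_le_pow_left₀ (abs_nonneg _) (gBound hC (θ' - θ₀) x) 2
    have hRint : IntegrableOn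
        (fun x => (expFam ψ θ' x - expFam ψ θ₀ x) * (∑ i, (θ' - θ₀) i * ψ i x))
        (Set.Icc (0:ℝ) 1) := by
      apply intOn (((expFam_meas hψmeas θ').sub (expFam_meas hψmeas θ₀)).mul
          (gMeas hψmeas (θ' - θ₀)))
        (C := (Real.exp (∑ i, |θ' i| * C i) + Real.exp (∑ i, |θ₀ i| * C i))
          * (∑ i, |(θ' - θ₀) i| * C i))
      intro x
      rw [Pi.mul_apply, abs_mul]
      refine mul_le_mul ?_ (gBound hC (θ' - θ₀) x) (abs_nonneg _) (by positivity)
      calc |expFam ψ θ' x - expFam ψ θ₀ x| ≤ |expFam ψ θ' x| + |expFam ψ θ₀ x| := abs_sub _ _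
        _ ≤ _ := add_le_add (expFam_abs_le hC θ' x) (expFam_abs_le hC θ₀ x)
    have hIineq := setIntegral_mono_on hLint hRint measurableSet_Icc hpt
    rw [integral_div, hgint] at hIineq
    have hR : (∫ x in Set.Icc (0:ℝ) 1,
          (expFam ψ θ' x - expFam ψ θ₀ x) * (∑ i, (θ' - θ₀) i * ψ i x))
        = ∑ i, (θ' i - θ₀ i) *
            ((∫ x in Set.Icc (0:ℝ) 1, expFam ψ θ' x * ψ i x) - β₀ i) := by
      have h1 : (fun x => (expFam ψ θ' x - expFam ψ θ₀ x) * (∑ i, (θ' - θ₀) i * ψ i x))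
          = fun x => expFam ψ θ' x * (∑ i, (θ' - θ₀) i * ψ i x)
              - expFam ψ θ₀ x * (∑ i, (θ' - θ₀) i * ψ i x) := by
        funext x
        ring
      rw [h1, integral_sub
          (expFam_mul_intOn hψmeas hC (gMeas hψmeas (θ' - θ₀)) (gBound hC (θ' - θ₀)) θ')
          (expFam_mul_intOn hψmeas hC (gMeas hψmeas (θ' - θ₀)) (gBound hC (θ' - θ₀)) θ₀),
        integral_expFam_mul_sum hψmeas hC θ' _, integral_expFam_mul_sum hψmeas hC θ₀ _,
        ← Finset.sum_sub_distrib]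
      refine Finset.sum_congr rfl fun i _ => ?_
      rw [hβ₀ i]
      simp only [Pi.sub_apply]
      ring
    rw [hR] at hIineq
    have husq : euclNorm (θ' - θ₀) ^ 2 = ∑ i, (θ' - θ₀) i ^ 2 := euclNorm_sq _
    rw [husq]
    exact hIineq
  -- derivative of L along lines
  have hLderiv : ∀ θ' c : Fin m → ℝ, HasDerivAt (fun t : ℝ => L (θ' + t • c))
      ((∑ i, c i * ∫ x in Set.Icc (0:ℝ) 1, expFam ψ θ' x * ψ i x)
        - ∑ i, βt i * c i) 0 := by
    intro θ' c
    have h1 := hasDerivAt_expFam_line hψmeas hC θ' c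
    have h2 : HasDerivAt (fun t : ℝ => ∑ i, βt i * (θ' + t • c) i) (∑ i, βt i * c i) 0 := by
      have hfun : (fun t : ℝ => ∑ i, βt i * (θ' + t • c) i)
          = fun t : ℝ => (∑ i, βt i * θ' i) + t * ∑ i, βt i * c i := by
        funext t
        rw [Finset.mul_sum, ← Finset.sum_add_distrib]
        refine Finset.sum_congr rfl fun i _ => ?_
        simp only [Pi.add_apply, Pi.smul_apply, smul_eq_mul]
        ring
      rw [hfun]
      simpa using ((hasDerivAt_id (0:ℝ)).mul_const (∑ i, βt i * c i)).const_add
        (∑ i, βt i * θ' i)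
    simp only [hL]
    exact h1.sub h2
  -- the compact ball
  set K : Set (Fin m → ℝ) := {θ | euclNorm (θ - θ₀) ≤ 1 / A} with hK
  have hθ₀K : θ₀ ∈ K := by
    simp [hK, euclNorm, Set.mem_setOf_eq]
    positivity
  have hKcomp : IsCompact K := by
    have hcont : Continuous fun θ : Fin m → ℝ => euclNorm (θ - θ₀) := by
      show Continuous fun θ : Fin m → ℝ => Real.sqrt (∑ i, (θ i - θ₀ i) ^ 2)
      apply Real.continuous_sqrt.comp
      exact continuous_finset_sum _ fun i _ =>
        ((continuous_apply i).sub continuous_const).pow 2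
    apply Metric.isCompact_of_isClosed_isBounded
    · exact isClosed_le hcont continuous_const
    · refine (Metric.isBounded_closedBall (x := θ₀) (r := 1 / A)).subset ?_
      intro θ hθ
      rw [Metric.mem_closedBall, dist_pi_le_iff (by positivity)]
      intro i
      rw [Real.dist_eq]
      exact (abs_le_euclNorm (θ - θ₀) i).trans hθ
  obtain ⟨θs, hθsK, hmin⟩ := hKcomp.exists_isMinOn ⟨θ₀, hθ₀K⟩ hLcont.continuousOn
  -- minimizer is interior
  have hθs_lt : euclNorm (θs - θ₀) < 1 / A := by
    by_contra hcon
    push_neg at hcon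
    have hmemK : euclNorm (θs - θ₀) ≤ 1 / A := hθsK
    have heq : euclNorm (θs - θ₀) = 1 / A := le_antisymm hmemK hcon
    set P : ℝ := ∑ i, (θs i - θ₀ i) *
        ((∫ x in Set.Icc (0:ℝ) 1, expFam ψ θs x * ψ i x) - βt i) with hPdef
    have hd := hLderiv θs (θ₀ - θs)
    have hval : ((∑ i, (θ₀ - θs) i * ∫ x in Set.Icc (0:ℝ) 1, expFam ψ θs x * ψ i x)
          - ∑ i, βt i * (θ₀ - θs) i) = -P := by
      rw [hPdef, ← Finset.sum_sub_distrib, ← Finset.sum_neg_distrib]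
      refine Finset.sum_congr rfl fun i _ => ?_
      simp only [Pi.sub_apply]
      ring
    rw [hval] at hd
    have hseg : ∀ t ∈ Set.Ioo (0:ℝ) 1, L θs ≤ L (θs + t • (θ₀ - θs)) := by
      intro t ht
      apply isMinOn_iff.1 hmin
      show euclNorm (θs + t • (θ₀ - θs) - θ₀) ≤ 1 / A
      have hpt2 : θs + t • (θ₀ - θs) - θ₀ = (1 - t) • (θs - θ₀) := by
        funext j
        simp only [Pi.add_apply, Pi.smul_apply, Pi.sub_apply, smul_eq_mul]
        ring
      rw [hpt2, euclNorm_smul, heq, abs_of_nonneg (by linarith [ht.2] : (0:ℝ) ≤ 1 - t)]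
      have h8 : (0:ℝ) ≤ 1 / A := by positivity
      nlinarith [ht.1]
    have hge : 0 ≤ -P := by
      have hT := hasDerivAt_iff_tendsto_slope.1 hd
      have hT2 : Filter.Tendsto (slope (fun t : ℝ => L (θs + t • (θ₀ - θs))) 0)
          (nhdsWithin 0 (Set.Ioi 0)) (nhds (-P)) := by
        refine hT.mono_left (nhdsWithin_mono 0 ?_)
        intro y hy
        simp only [Set.mem_compl_iff, Set.mem_singleton_iff]
        exact ne_of_gt hy
      refine ge_of_tendsto hT2 ?_
      · filter_upwards [Ioo_mem_nhdsGT_of_mem (Set.mem_Ico.2 ⟨le_rfl, one_pos⟩)] with t ht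
        rw [slope_def_field]
        show 0 ≤ (L (θs + t • (θ₀ - θs)) - L (θs + (0:ℝ) • (θ₀ - θs))) / (t - 0)
        have h0 : θs + (0:ℝ) • (θ₀ - θs) = θs := by funext j; simp
        rw [h0]
        have h9 := hseg t ht
        apply div_nonneg (by linarith) (by linarith [ht.1])
    have hmono := mono θs (by rw [heq, mul_one_div, div_self hApos.ne'])
    have hCS : ∑ i, (θs i - θ₀ i) * (βt i - β₀ i) ≤ euclNorm (θs - θ₀) * δ :=
      cauchy_schwarz (θs - θ₀) (βt - β₀)
    have hsplitP : P = (∑ i, (θs i - θ₀ i) *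
          ((∫ x in Set.Icc (0:ℝ) 1, expFam ψ θs x * ψ i x) - β₀ i))
        - ∑ i, (θs i - θ₀ i) * (βt i - β₀ i) := by
      rw [hPdef, ← Finset.sum_sub_distrib]
      exact Finset.sum_congr rfl fun i _ => by ring
    rw [heq] at hmono hCS
    have hden : (0:ℝ) < b * Real.exp 1 := mul_pos hbpos epos
    have c1 : (1/A)^2/(b*Real.exp 1) ≤ P + (1/A) * δ := by
      rw [hsplitP]
      linarith
    have c2 : (1/A) * δ ≤ (1/A) * (1/(2*Real.exp 1*b*A)) :=
      mul_le_mul_of_nonneg_left hβt (by positivity)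
    have c3 : P ≤ 0 := by linarith
    have c4 : (1/A)^2/(b*Real.exp 1) ≤ (1/A) * (1/(2*Real.exp 1*b*A)) := by linarith
    have c5 : (1/A)^2/(b*Real.exp 1) = 1/(A^2*(b*Real.exp 1)) := by
      rw [div_pow, one_pow, div_div]
    have c6 : (1/A)*(1/(2*Real.exp 1*b*A)) = 1/(2*(A^2*(b*Real.exp 1))) := by
      rw [div_mul_div_comm, one_mul]
      congr 1
      ring
    rw [c5, c6] at c4
    have c7 : (0:ℝ) < A^2*(b*Real.exp 1) := by positivity
    rw [div_le_div_iff₀ c7 (by positivity)] at c4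
    nlinarith [c7]
  -- gradient vanishes
  have hgrad : ∀ i, (∫ x in Set.Icc (0:ℝ) 1, expFam ψ θs x * ψ i x) = βt i := by
    intro i
    set e1 : Fin m → ℝ := fun k => if k = i then (1:ℝ) else 0 with he1
    have hd := hLderiv θs e1
    have hsingle : euclNorm e1 = 1 := by
      rw [euclNorm, he1]
      simp
    have hloc : IsLocalMin (fun t : ℝ => L (θs + t • e1)) 0 := by
      have hε : 0 < 1 / A - euclNorm (θs - θ₀) := by linarith
      have hIoo : Set.Ioo (-(1 / A - euclNorm (θs - θ₀))) (1 / A - euclNorm (θs - θ₀))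
          ∈ nhds (0:ℝ) := Ioo_mem_nhds (by linarith) hε
      filter_upwards [hIoo] with t ht
      have h0 : θs + (0:ℝ) • e1 = θs := by funext j; simp
      show L (θs + (0:ℝ) • e1) ≤ L (θs + t • e1)
      rw [h0]
      apply isMinOn_iff.1 hmin
      show euclNorm (θs + t • e1 - θ₀) ≤ 1 / A
      have hsplit : θs + t • e1 - θ₀ = (θs - θ₀) + t • e1 := by
        funext j
        simp only [Pi.add_apply, Pi.smul_apply, Pi.sub_apply, smul_eq_mul]
        ring
      rw [hsplit]
      refine le_trans (euclNorm_add_le _ _) ?_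
      rw [euclNorm_smul, hsingle, mul_one]
      have habs : |t| < 1 / A - euclNorm (θs - θ₀) := abs_lt.2 ⟨ht.1, ht.2⟩
      linarith
    have hzero := hloc.hasDerivAt_eq_zero hd
    have hsum1 : (∑ j, e1 j * ∫ x in Set.Icc (0:ℝ) 1, expFam ψ θs x * ψ j x)
        = ∫ x in Set.Icc (0:ℝ) 1, expFam ψ θs x * ψ i x := by
      rw [he1]
      simp
    have hsum2 : (∑ j, βt j * e1 j) = βt i := by
      rw [he1]
      simp
    rw [hsum1, hsum2] at hzero
    linarith
  -- conclusion (i)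
  have hnorm : euclNorm (θs - θ₀) ≤ 2 * Real.exp 1 * b * δ := by
    have hsm : A * euclNorm (θs - θ₀) ≤ 1 := by
      have h1 : A * euclNorm (θs - θ₀) ≤ A * (1 / A) :=
        mul_le_mul_of_nonneg_left hθs_lt.le hApos.le
      rw [mul_one_div, div_self hApos.ne'] at h1
      exact h1
    have h1 := mono θs hsm
    have h2 : (∑ i, (θs i - θ₀ i) * ((∫ x in Set.Icc (0:ℝ) 1, expFam ψ θs x * ψ i x) - β₀ i))
        = ∑ i, (θs i - θ₀ i) * (βt i - β₀ i) :=
      Finset.sum_congr rfl fun i _ => by rw [hgrad i]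
    rw [h2] at h1
    have h3 : (∑ i, (θs i - θ₀ i) * (βt i - β₀ i)) ≤ euclNorm (θs - θ₀) * δ :=
      cauchy_schwarz (θs - θ₀) (βt - β₀)
    rcases eq_or_lt_of_le (euclNorm_nonneg (θs - θ₀)) with h0 | h0
    · rw [← h0]
      positivity
    · have h4 : euclNorm (θs - θ₀) ^ 2 / (b * Real.exp 1) ≤ euclNorm (θs - θ₀) * δ :=
        le_trans h1 h3
      have h5 := (div_le_iff₀ (mul_pos hbpos epos)).1 h4
      nlinarith [h0, hbpos, epos, hδnn]
  have hflip : euclNorm (θ₀ - θs) = euclNorm (θs - θ₀) := by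
    rw [show θ₀ - θs = -(θs - θ₀) from by
        funext j
        simp only [Pi.neg_apply, Pi.sub_apply]
        ring,
      euclNorm_neg]
  have hlog1 : ∀ x, Real.log (expFam ψ θ₀ x / expFam ψ θs x)
      = ∑ i, (θ₀ - θs) i * ψ i x := by
    intro x
    rw [show expFam ψ θ₀ x = Real.exp (∑ i, θ₀ i * ψ i x) from rfl,
      show expFam ψ θs x = Real.exp (∑ i, θs i * ψ i x) from rfl,
      ← Real.exp_sub, Real.log_exp, ← Finset.sum_sub_distrib]
    exact Finset.sum_congr rfl fun i _ => by simp only [Pi.sub_apply]; ring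
  refine ⟨θs, hgrad, hnorm, ?_, ?_⟩
  · have hfun : (fun x => Real.log (expFam ψ θ₀ x / expFam ψ θs x))
        = fun x => ∑ i, (θ₀ - θs) i * ψ i x := funext hlog1
    rw [hfun]
    have h1 := hA (θ₀ - θs)
    rw [integral_g_sq hψmeas hC horth] at h1
    have h2 : Real.sqrt (∑ i, (θ₀ - θs) i ^ 2) = euclNorm (θ₀ - θs) := rfl
    rw [h2, hflip] at h1
    calc supIcc (fun x => ∑ i, (θ₀ - θs) i * ψ i x)
        ≤ A * euclNorm (θs - θ₀) := h1
      _ ≤ A * (2 * Real.exp 1 * b * δ) := mul_le_mul_of_nonneg_left hnorm hApos.le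
      _ = 2 * Real.exp 1 * b * A * δ := by ring
  · have hlog2 : ∀ x, Real.log (expFam ψ θs x / expFam ψ θ₀ x)
        = -∑ i, (θ₀ - θs) i * ψ i x := by
      intro x
      rw [show expFam ψ θ₀ x = Real.exp (∑ i, θ₀ i * ψ i x) from rfl,
        show expFam ψ θs x = Real.exp (∑ i, θs i * ψ i x) from rfl,
        ← Real.exp_sub, Real.log_exp, ← Finset.sum_neg_distrib, ← Finset.sum_sub_distrib]
      exact Finset.sum_congr rfl fun i _ => by simp only [Pi.sub_apply]; ring
    have hQint : IntegrableOn
        (fun x => (expFam ψ θ₀ x - expFam ψ θs x) * (∑ i, (θ₀ - θs) i * ψ i x))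
        (Set.Icc (0:ℝ) 1) := by
      apply intOn (((expFam_meas hψmeas θ₀).sub (expFam_meas hψmeas θs)).mul
          (gMeas hψmeas (θ₀ - θs)))
        (C := (Real.exp (∑ i, |θ₀ i| * C i) + Real.exp (∑ i, |θs i| * C i))
          * (∑ i, |(θ₀ - θs) i| * C i))
      intro x
      rw [Pi.mul_apply, abs_mul]
      refine mul_le_mul ?_ (gBound hC (θ₀ - θs) x) (abs_nonneg _) (by positivity)
      calc |expFam ψ θ₀ x - expFam ψ θs x|
          ≤ |expFam ψ θ₀ x| + |expFam ψ θs x| := abs_sub _ _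
        _ ≤ _ := add_le_add (expFam_abs_le hC θ₀ x) (expFam_abs_le hC θs x)
    have hNint : IntegrableOn
        (fun x => expFam ψ θs x * (-∑ i, (θ₀ - θs) i * ψ i x)
          - expFam ψ θs x + expFam ψ θ₀ x) (Set.Icc (0:ℝ) 1) :=
      ((expFam_mul_intOn hψmeas hC ((gMeas hψmeas (θ₀ - θs)).neg)
          (fun x => by rw [Pi.neg_apply, abs_neg]; exact gBound hC (θ₀ - θs) x) θs).sub
        (expFam_intOn hψmeas hC θs)).add (expFam_intOn hψmeas hC θ₀)
    have hKL : KLdiv (expFam ψ θ₀) (expFam ψ θs)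
        = (∫ x in Set.Icc (0:ℝ) 1,
            (expFam ψ θ₀ x - expFam ψ θs x) * (∑ i, (θ₀ - θs) i * ψ i x))
          - ∫ x in Set.Icc (0:ℝ) 1,
            (expFam ψ θs x * (-∑ i, (θ₀ - θs) i * ψ i x)
              - expFam ψ θs x + expFam ψ θ₀ x) := by
      rw [KLdiv, ← integral_sub hQint hNint]
      congr 1
      funext x
      rw [hlog1 x]
      ring
    have hN : 0 ≤ ∫ x in Set.Icc (0:ℝ) 1,
        (expFam ψ θs x * (-∑ i, (θ₀ - θs) i * ψ i x)
          - expFam ψ θs x + expFam ψ θ₀ x) := by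
      apply setIntegral_nonneg measurableSet_Icc
      intro x hx
      have h := kl_integrand_nonneg (a := expFam ψ θs x) (c := expFam ψ θ₀ x)
        (Real.exp_pos _) (Real.exp_pos _)
      rw [hlog2 x] at h
      exact h
    have hQ : (∫ x in Set.Icc (0:ℝ) 1,
          (expFam ψ θ₀ x - expFam ψ θs x) * (∑ i, (θ₀ - θs) i * ψ i x))
        = ∑ i, (θ₀ i - θs i) * (β₀ i - βt i) := by
      have h1 : (fun x => (expFam ψ θ₀ x - expFam ψ θs x) * (∑ i, (θ₀ - θs) i * ψ i x))
          = fun x => expFam ψ θ₀ x * (∑ i, (θ₀ - θs) i * ψ i x)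
              - expFam ψ θs x * (∑ i, (θ₀ - θs) i * ψ i x) := by
        funext x
        ring
      rw [h1, integral_sub
          (expFam_mul_intOn hψmeas hC (gMeas hψmeas (θ₀ - θs)) (gBound hC (θ₀ - θs)) θ₀)
          (expFam_mul_intOn hψmeas hC (gMeas hψmeas (θ₀ - θs)) (gBound hC (θ₀ - θs)) θs),
        integral_expFam_mul_sum hψmeas hC θ₀ _, integral_expFam_mul_sum hψmeas hC θs _,
        ← Finset.sum_sub_distrib]
      refine Finset.sum_congr rfl fun i _ => ?_
      rw [← hβ₀ i, hgrad i]
      simp only [Pi.sub_apply]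
      ring
    have hCS2 : (∑ i, (θ₀ i - θs i) * (β₀ i - βt i)) ≤ euclNorm (θs - θ₀) * δ := by
      have h := cauchy_schwarz (θ₀ - θs) (β₀ - βt)
      have e2 : euclNorm (β₀ - βt) = δ := by
        rw [hδ, show β₀ - βt = -(βt - β₀) from by
            funext j
            simp only [Pi.neg_apply, Pi.sub_apply]
            ring,
          euclNorm_neg]
      rw [hflip, e2] at h
      exact h
    rw [hKL, hQ]
    have final : euclNorm (θs - θ₀) * δ ≤ 2 * Real.exp 1 * b * δ ^ 2 := by
      have h := mul_le_mul_of_nonneg_right hnorm hδnn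
      calc euclNorm (θs - θ₀) * δ ≤ 2 * Real.exp 1 * b * δ * δ := h
        _ = 2 * Real.exp 1 * b * δ ^ 2 := by ring
    linarith
end

section
/- Let ε = (ε₁,…,ε_n) be a random vector with independent standard Gaussian coordinates, let A be a nonzero real symmetric n×n matrix with eigenvalues s₁,…,s_n, and set Z = εᵀAε − tr(A). Then for every λ with 0 < λ < 1/(2 maxᵢ|sᵢ|), log E[e^{λZ}] ≤ λ² (Σᵢ₌₁ⁿ sᵢ²) / (1 − 2λ maxᵢ|sᵢ|). -/
open MeasureTheory ProbabilityTheory Matrix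
open scoped NNReal ENNReal

section Aux

open Real Set

lemma aux_key_pos (x : ℝ) (hx0 : 0 ≤ x) (hx : x < 1/2) :
    -x - Real.log (1 - 2*x) / 2 ≤ x^2 / (1 - 2*x) := by
  set g : ℝ → ℝ := fun t => t^2/(1-2*t) + t + Real.log (1-2*t)/2 with hg
  have hpos : ∀ t ∈ Icc (0:ℝ) x, (0:ℝ) < 1 - 2*t := fun t ht => by
    have := ht.2; nlinarith [ht.1]
  have hd : ∀ t ∈ Ioo (0:ℝ) x, HasDerivAt g (2*t^2/(1-2*t)^2) t := by
    intro t ht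
    have htpos : (0:ℝ) < 1 - 2*t := hpos t ⟨ht.1.le, ht.2.le⟩
    have hne : (1:ℝ) - 2*t ≠ 0 := ne_of_gt htpos
    have h1 : HasDerivAt (fun t : ℝ => t^2) (2*t) t := by
      simpa using hasDerivAt_pow 2 t
    have h2 : HasDerivAt (fun t : ℝ => 1 - 2*t) (-2) t := by
      simpa using ((hasDerivAt_id t).const_mul (2:ℝ)).const_sub 1
    have h3 := h1.div h2 hne
    have h4 := (h2.log hne).div_const 2
    have h5 := (h3.add (hasDerivAt_id t)).add h4
    refine h5.congr_deriv ?_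
    field_simp
    ring
  have hcont : ContinuousOn g (Icc 0 x) := by
    have hne : ∀ t ∈ Icc (0:ℝ) x, (1:ℝ) - 2*t ≠ 0 := fun t ht => ne_of_gt (hpos t ht)
    exact (((continuousOn_pow 2).div (by fun_prop) hne).add continuousOn_id).add
      ((ContinuousOn.log (by fun_prop) hne).div_const 2)
  have hmono : MonotoneOn g (Icc 0 x) := by
    refine monotoneOn_of_deriv_nonneg (convex_Icc 0 x) hcont (fun t ht => ?_) (fun t ht => ?_)
    · rw [interior_Icc] at ht
      exact ((hd t ht).differentiableAt).differentiableWithinAt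
    · rw [interior_Icc] at ht
      rw [(hd t ht).deriv]
      positivity
  have h0 : g 0 = 0 := by simp [hg]
  have hx' : g 0 ≤ g x := hmono ⟨le_refl 0, hx0⟩ ⟨hx0, le_refl x⟩ hx0
  rw [h0] at hx'
  simp only [hg] at hx'
  linarith

lemma aux_key_neg (x : ℝ) (hx0 : x ≤ 0) (hx : -(1/2) < x) :
    -x - Real.log (1 - 2*x) / 2 ≤ x^2 / (1 + 2*x) := by
  set g : ℝ → ℝ := fun t => t^2/(1+2*t) + t + Real.log (1-2*t)/2 with hg
  have hpos : ∀ t ∈ Icc x (0:ℝ), (0:ℝ) < 1 + 2*t ∧ (0:ℝ) < 1 - 2*t := fun t ht => by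
    constructor <;> nlinarith [ht.1, ht.2]
  have hd : ∀ t ∈ Ioo x (0:ℝ), HasDerivAt g (-(2*t^2*(5+6*t))/((1+2*t)^2*(1-2*t))) t := by
    intro t ht
    have h := hpos t ⟨ht.1.le, ht.2.le⟩
    have hne1 : (1:ℝ) + 2*t ≠ 0 := ne_of_gt h.1
    have hne2 : (1:ℝ) - 2*t ≠ 0 := ne_of_gt h.2
    have h1 : HasDerivAt (fun t : ℝ => t^2) (2*t) t := by
      simpa using hasDerivAt_pow 2 t
    have h2 : HasDerivAt (fun t : ℝ => 1 + 2*t) (2) t := by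
      simpa using ((hasDerivAt_id t).const_mul (2:ℝ)).const_add 1
    have h2' : HasDerivAt (fun t : ℝ => 1 - 2*t) (-2) t := by
      simpa using ((hasDerivAt_id t).const_mul (2:ℝ)).const_sub 1
    have h3 := h1.div h2 hne1
    have h4 := (h2'.log hne2).div_const 2
    have h5 := (h3.add (hasDerivAt_id t)).add h4
    refine h5.congr_deriv ?_
    field_simp
    ring
  have hcont : ContinuousOn g (Icc x 0) := by
    have hne1 : ∀ t ∈ Icc x (0:ℝ), (1:ℝ) + 2*t ≠ 0 := fun t ht => ne_of_gt (hpos t ht).1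
    have hne2 : ∀ t ∈ Icc x (0:ℝ), (1:ℝ) - 2*t ≠ 0 := fun t ht => ne_of_gt (hpos t ht).2
    exact (((continuousOn_pow 2).div (by fun_prop) hne1).add continuousOn_id).add
      ((ContinuousOn.log (by fun_prop) hne2).div_const 2)
  have hanti : AntitoneOn g (Icc x 0) := by
    refine antitoneOn_of_deriv_nonpos (convex_Icc x 0) hcont (fun t ht => ?_) (fun t ht => ?_)
    · rw [interior_Icc] at ht
      exact ((hd t ht).differentiableAt).differentiableWithinAt
    · rw [interior_Icc] at ht
      rw [(hd t ht).deriv]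
      have h := hpos t ⟨ht.1.le, ht.2.le⟩
      have h5 : (0:ℝ) < 5 + 6*t := by nlinarith [ht.1]
      apply div_nonpos_of_nonpos_of_nonneg
      · nlinarith [sq_nonneg t]
      · exact (mul_pos (pow_pos h.1 2) h.2).le
  have h0 : g 0 = 0 := by simp [hg]
  have hx' : g 0 ≤ g x := hanti ⟨le_refl x, hx0⟩ ⟨hx0, le_refl 0⟩ hx0
  rw [h0] at hx'
  simp only [hg] at hx'
  linarith

lemma aux_key_ineq (x : ℝ) (hx : |x| < 1/2) :
    -x - Real.log (1 - 2*x) / 2 ≤ x^2 / (1 - 2*|x|) := by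
  rcases le_or_gt 0 x with h | h
  · rw [abs_of_nonneg h] at hx ⊢
    exact aux_key_pos x h hx
  · rw [abs_of_neg h] at hx ⊢
    calc -x - Real.log (1-2*x)/2 ≤ x^2/(1+2*x) := by
          apply aux_key_neg x h.le
          linarith
      _ = x^2/(1-2*(-x)) := by ring_nf

lemma aux_pi_gaussian_eq (n : ℕ) :
    (Measure.pi fun _ : Fin n => gaussianReal 0 1) =
      (volume : Measure (Fin n → ℝ)).withDensity
        (fun x => ENNReal.ofReal (∏ i, gaussianPDFReal 0 1 (x i))) := by
  refine Measure.pi_eq fun s hs => ?_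
  rw [withDensity_apply _ (MeasurableSet.univ_pi hs),
    ← lintegral_indicator (MeasurableSet.univ_pi hs)]
  have hind : ∀ x : Fin n → ℝ,
      (Set.univ.pi s).indicator (fun x => ENNReal.ofReal (∏ i, gaussianPDFReal 0 1 (x i))) x
        = ENNReal.ofReal (∏ i, (s i).indicator (gaussianPDFReal 0 1) (x i)) := by
    intro x
    by_cases hx : x ∈ Set.univ.pi s
    · rw [Set.indicator_of_mem hx]
      congr 1
      exact Finset.prod_congr rfl fun i _ =>
        (Set.indicator_of_mem (hx i (Set.mem_univ i)) _).symm
    · rw [Set.indicator_of_notMem hx]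
      obtain ⟨i, hi⟩ : ∃ i, x i ∉ s i := by simpa [Set.mem_univ_pi] using hx
      rw [Finset.prod_eq_zero (Finset.mem_univ i) (Set.indicator_of_notMem hi _)]
      simp
  simp_rw [hind]
  have hint : ∀ i : Fin n, Integrable ((s i).indicator (gaussianPDFReal 0 1)) :=
    fun i => (integrable_gaussianPDFReal 0 1).indicator (hs i)
  rw [volume_pi, ← ofReal_integral_eq_lintegral_ofReal (Integrable.fintype_prod hint)
      (ae_of_all _ fun x => Finset.prod_nonneg fun i _ =>
        Set.indicator_nonneg (fun t _ => gaussianPDFReal_nonneg 0 1 t) _)]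
  rw [MeasureTheory.integral_fintype_prod_eq_prod (𝕜 := ℝ)
      (fun i => (s i).indicator (gaussianPDFReal 0 1))]
  rw [ENNReal.ofReal_prod_of_nonneg (fun i _ => integral_nonneg
      (Set.indicator_nonneg (fun t _ => gaussianPDFReal_nonneg 0 1 t)))]
  refine Finset.prod_congr rfl fun i _ => ?_
  rw [gaussianReal_apply_eq_integral 0 one_ne_zero (s i), integral_indicator (hs i)]

lemma aux_gauss_exp_int (a : ℝ) (ha : 2*a < 1) :
    ∫ t : ℝ, gaussianPDFReal 0 1 t * Real.exp (a*t^2 - a)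
      = Real.exp (-a) * (Real.sqrt (1-2*a))⁻¹ := by
  have hb : (0:ℝ) < 1/2 - a := by linarith
  have hsq : Real.sqrt (2*π) ≠ 0 := by positivity
  have hpt : ∀ t : ℝ, gaussianPDFReal 0 1 t * Real.exp (a*t^2 - a)
      = ((Real.sqrt (2*π))⁻¹ * Real.exp (-a)) * Real.exp (-(1/2-a)*t^2) := by
    intro t
    simp only [gaussianPDFReal, NNReal.coe_one, mul_one, sub_zero]
    rw [mul_assoc, ← Real.exp_add, mul_assoc, ← Real.exp_add]
    congr 2
    ring
  simp_rw [hpt]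
  rw [MeasureTheory.integral_const_mul, integral_gaussian]
  have h1 : π / (1/2 - a) = 2*π / (1-2*a) := by
    rw [div_eq_div_iff hb.ne' (by linarith : (1:ℝ)-2*a ≠ 0)]
    ring
  rw [h1, Real.sqrt_div (by positivity : (0:ℝ) ≤ 2*π)]
  field_simp

lemma aux_prod_pdf {n : ℕ} (x : Fin n → ℝ) :
    ∏ i, gaussianPDFReal 0 1 (x i)
      = ((Real.sqrt (2*π))⁻¹)^n * Real.exp (-(∑ i, (x i)^2)/2) := by
  have : ∀ i : Fin n, gaussianPDFReal 0 1 (x i)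
      = (Real.sqrt (2*π))⁻¹ * Real.exp (-(x i)^2/2) := by
    intro i
    simp [gaussianPDFReal]
  rw [Finset.prod_congr rfl fun i _ => this i, Finset.prod_mul_distrib,
    Finset.prod_const, ← Real.exp_sum]
  congr 2
  · simp
  · rw [← Finset.sum_div, ← Finset.sum_neg_distrib]

end Aux

/-- bound on the log-Laplace transform of a Gaussian quadratic form.
For `ε` a vector of independent standard Gaussians, `A ≠ 0` real symmetric with
eigenvalues `sᵢ`, `Z = εᵀAε − tr A`, and `0 < λ < 1/(2 maxᵢ |sᵢ|)`,
`log E[e^{λZ}] ≤ λ² (Σᵢ sᵢ²) / (1 − 2λ maxᵢ |sᵢ|)`. -/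
theorem stmt_6 (n : ℕ) (A : Matrix (Fin n) (Fin n) ℝ) (hA : A.IsHermitian) (hA0 : A ≠ 0)
    (lam : ℝ) (hlam : 0 < lam)
    (hlam' : 2 * lam * (⨆ i, |hA.eigenvalues i|) < 1) :
    Real.log (∫ ω : Fin n → ℝ, Real.exp (lam * (ω ⬝ᵥ A.mulVec ω - A.trace))
        ∂(Measure.pi fun _ : Fin n => gaussianReal 0 1)) ≤
      lam ^ 2 * (∑ i, hA.eigenvalues i ^ 2) / (1 - 2 * lam * (⨆ i, |hA.eigenvalues i|)) := by
  rcases Nat.eq_zero_or_pos n with hn | hn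
  · subst hn
    exact absurd (Subsingleton.elim A 0) hA0
  have : Nonempty (Fin n) := ⟨⟨0, hn⟩⟩
  set s : Fin n → ℝ := hA.eigenvalues with hs
  set M : ℝ := ⨆ i, |s i| with hM
  have hbdd : BddAbove (Set.range fun i => |s i|) :=
    Set.Finite.bddAbove (Set.finite_range _)
  have hMi : ∀ i, |s i| ≤ M := fun i => le_ciSup hbdd i
  have hden : (0:ℝ) < 1 - 2*lam*M := by linarith [hlam']
  have hai : ∀ i, |lam * s i| < 1/2 := by
    intro i
    rw [abs_mul, abs_of_pos hlam]
    have h1 : lam * |s i| ≤ lam * M := by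
      exact mul_le_mul_of_nonneg_left (hMi i) hlam.le
    nlinarith
  have hbi : ∀ i, (0:ℝ) < 1 - 2*(lam * s i) := by
    intro i
    have := abs_lt.mp (hai i)
    linarith [this.2]
  -- linear algebra: diagonalization
  set U : Matrix (Fin n) (Fin n) ℝ := (hA.eigenvectorUnitary : Matrix (Fin n) (Fin n) ℝ) with hUdef
  have hstar : star (hA.eigenvectorUnitary : Matrix (Fin n) (Fin n) ℝ) = Uᵀ := by
    rw [Matrix.star_eq_conjTranspose, conjTranspose_eq_transpose_of_trivial]
  have hU1 : Uᵀ * U = 1 := by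
    rw [← hstar]; exact Unitary.star_mul_self_of_mem hA.eigenvectorUnitary.2
  have hU2 : U * Uᵀ = 1 := by
    rw [← hstar]; exact Unitary.mul_star_self_of_mem hA.eigenvectorUnitary.2
  have hAeq : A = U * diagonal s * Uᵀ := by
    have := hA.spectral_theorem
    rw [Unitary.conjStarAlgAut_apply, hstar] at this
    simpa using this
  have hT : A.trace = ∑ i, s i := by
    rw [hAeq, trace_mul_cycle, hU1, Matrix.one_mul, trace_diagonal]
  have hQ : ∀ ω : Fin n → ℝ, ω ⬝ᵥ A.mulVec ω = ∑ i, s i * ((Uᵀ *ᵥ ω) i)^2 := by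
    intro ω
    rw [hAeq]
    rw [show (U * diagonal s * Uᵀ) *ᵥ ω = U *ᵥ (diagonal s *ᵥ (Uᵀ *ᵥ ω)) by
      rw [mulVec_mulVec, mulVec_mulVec]]
    rw [dotProduct_mulVec, ← mulVec_transpose]
    simp only [dotProduct, mulVec_diagonal]
    exact Finset.sum_congr rfl fun i _ => by ring
  have hN : ∀ ω : Fin n → ℝ, ∑ i, ((Uᵀ *ᵥ ω) i)^2 = ∑ i, (ω i)^2 := by
    intro ω
    have h1 : ∑ i, ((Uᵀ *ᵥ ω) i)^2 = (Uᵀ *ᵥ ω) ⬝ᵥ (Uᵀ *ᵥ ω) := by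
      simp [dotProduct, sq]
    have h2 : ∑ i, (ω i)^2 = ω ⬝ᵥ ω := by simp [dotProduct, sq]
    rw [h1, h2]
    nth_rewrite 1 [mulVec_transpose]
    rw [dotProduct_mulVec, vecMul_vecMul, hU2, vecMul_one]
  -- the main integral identity
  have hdet : Uᵀ.det ≠ 0 ∧ |Uᵀ.det| = 1 := by
    have h := congrArg Matrix.det hU2
    rw [det_mul, det_one, det_transpose] at h
    have habs : |U.det| = 1 := by
      rcases mul_self_eq_one_iff.mp h with h' | h' <;> rw [h'] <;> norm_num
    rw [det_transpose]
    constructor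
    · intro h0
      rw [h0] at habs
      norm_num at habs
    · exact habs
  have hmap : Measure.map (Matrix.toLin' Uᵀ) volume = volume := by
    rw [Real.map_matrix_volume_pi_eq_smul_volume_pi hdet.1, abs_inv, hdet.2]
    simp
  set φ : Fin n → ℝ → ℝ :=
    fun i t => gaussianPDFReal 0 1 t * Real.exp (lam * s i * t^2 - lam * s i) with hφ
  have hφcont : ∀ i, Continuous (φ i) := by
    intro i
    have : Continuous (gaussianPDFReal 0 1) := by
      unfold gaussianPDFReal
      fun_prop
    fun_prop
  have hX : ∀ ω : Fin n → ℝ,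
      (∏ i, gaussianPDFReal 0 1 (ω i)) * Real.exp (lam * (ω ⬝ᵥ A.mulVec ω - A.trace))
        = ∏ i, φ i ((Matrix.toLin' Uᵀ ω) i) := by
    intro ω
    simp only [Matrix.toLin'_apply, hφ]
    rw [Finset.prod_mul_distrib]
    have e1 : ∏ i, gaussianPDFReal 0 1 ((Uᵀ *ᵥ ω) i) = ∏ i, gaussianPDFReal 0 1 (ω i) := by
      rw [aux_prod_pdf, aux_prod_pdf, hN ω]
    have e2 : ∏ i, Real.exp (lam * s i * ((Uᵀ *ᵥ ω) i)^2 - lam * s i)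
        = Real.exp (lam * (ω ⬝ᵥ A.mulVec ω - A.trace)) := by
      rw [← Real.exp_sum]
      congr 1
      rw [mul_sub, hQ ω, hT, Finset.mul_sum, Finset.mul_sum, ← Finset.sum_sub_distrib]
      exact Finset.sum_congr rfl fun i _ => by ring
    rw [e1, e2]
  have hInt : (∫ ω : Fin n → ℝ, Real.exp (lam * (ω ⬝ᵥ A.mulVec ω - A.trace))
        ∂(Measure.pi fun _ : Fin n => gaussianReal 0 1))
      = ∏ i, (Real.exp (-(lam * s i)) * (Real.sqrt (1 - 2*(lam * s i)))⁻¹) := by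
    rw [aux_pi_gaussian_eq n]
    have hρmeas : Measurable fun x : Fin n → ℝ => ∏ i, gaussianPDFReal 0 1 (x i) :=
      Finset.measurable_prod _ fun i _ =>
        (measurable_gaussianPDFReal 0 1).comp (measurable_pi_apply i)
    have hρnn : ∀ x : Fin n → ℝ, 0 ≤ ∏ i, gaussianPDFReal 0 1 (x i) :=
      fun x => Finset.prod_nonneg fun i _ => gaussianPDFReal_nonneg 0 1 _
    have hwd : (fun x : Fin n → ℝ => ENNReal.ofReal (∏ i, gaussianPDFReal 0 1 (x i)))
        = fun x => ((Real.toNNReal (∏ i, gaussianPDFReal 0 1 (x i)) : ℝ≥0) : ℝ≥0∞) := rfl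
    rw [hwd, integral_withDensity_eq_integral_smul hρmeas.real_toNNReal]
    have hsmul : ∀ x : Fin n → ℝ,
        (Real.toNNReal (∏ i, gaussianPDFReal 0 1 (x i)) : ℝ≥0)
            • Real.exp (lam * (x ⬝ᵥ A.mulVec x - A.trace))
          = ∏ i, φ i ((Matrix.toLin' Uᵀ x) i) := by
      intro x
      rw [NNReal.smul_def, Real.coe_toNNReal _ (hρnn x), smul_eq_mul]
      exact hX x
    simp_rw [hsmul]
    have hΦmeas : AEStronglyMeasurable (fun y : Fin n → ℝ => ∏ i, φ i (y i))
        (Measure.map (Matrix.toLin' Uᵀ) volume) := by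
      apply Continuous.aestronglyMeasurable
      exact continuous_finset_prod _ fun i _ => (hφcont i).comp (continuous_apply i)
    have hTmeas : AEMeasurable (Matrix.toLin' Uᵀ) (volume : Measure (Fin n → ℝ)) :=
      (LinearMap.continuous_on_pi _).measurable.aemeasurable
    calc ∫ x : Fin n → ℝ, ∏ i, φ i ((Matrix.toLin' Uᵀ) x i)
        = ∫ y, (fun y : Fin n → ℝ => ∏ i, φ i (y i)) y
            ∂(Measure.map (Matrix.toLin' Uᵀ) volume) :=
          (MeasureTheory.integral_map hTmeas hΦmeas).symm
      _ = ∫ y : Fin n → ℝ, ∏ i, φ i (y i) := by rw [hmap]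
      _ = ∏ i, ∫ t : ℝ, φ i t :=
          MeasureTheory.integral_fintype_prod_volume_eq_prod (𝕜 := ℝ) φ
      _ = ∏ i, (Real.exp (-(lam * s i)) * (Real.sqrt (1 - 2*(lam * s i)))⁻¹) := by
          refine Finset.prod_congr rfl fun i _ => ?_
          simpa [hφ] using aux_gauss_exp_int (lam * s i) (by linarith [hbi i])
  rw [hInt]
  have hfac_pos : ∀ i, 0 < Real.exp (-(lam * s i)) * (Real.sqrt (1 - 2*(lam * s i)))⁻¹ :=
    fun i => mul_pos (Real.exp_pos _) (inv_pos.mpr (Real.sqrt_pos.mpr (hbi i)))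
  rw [Real.log_prod fun i _ => (hfac_pos i).ne']
  have hlog : ∀ i, Real.log (Real.exp (-(lam * s i)) * (Real.sqrt (1 - 2*(lam * s i)))⁻¹)
      = -(lam * s i) - Real.log (1 - 2*(lam * s i))/2 := by
    intro i
    rw [Real.log_mul (Real.exp_pos _).ne' (inv_pos.mpr (Real.sqrt_pos.mpr (hbi i))).ne',
      Real.log_exp, Real.log_inv, Real.log_sqrt (hbi i).le]
    ring
  rw [Finset.sum_congr rfl fun i _ => hlog i]
  have hstep : ∀ i : Fin n,
      -(lam * s i) - Real.log (1 - 2*(lam * s i))/2 ≤ (lam * s i)^2 / (1 - 2*lam*M) := by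
    intro i
    refine le_trans (aux_key_ineq (lam * s i) (hai i)) ?_
    have h1 : 1 - 2*lam*M ≤ 1 - 2*|lam * s i| := by
      rw [abs_mul, abs_of_pos hlam]
      have := mul_le_mul_of_nonneg_left (hMi i) hlam.le
      linarith
    gcongr
  refine le_trans (Finset.sum_le_sum fun i _ => hstep i) ?_
  rw [← Finset.sum_div]
  rw [show ∑ i, (lam * s i)^2 = lam^2 * ∑ i, s i^2 by
    rw [Finset.mul_sum]; exact Finset.sum_congr rfl fun i _ => by ring]
end

section
/- Let Z be a real-valued random variable, and let v ≥ 0 and c > 0 be constants such that log E[e^{λZ}] ≤ vλ²/(1 − 2cλ) for all λ with 0 < λ < 1/(2c). Then for every x > 0, P( Z > 2cx + 2√(vx) ) ≤ e^{−x}. -/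
open MeasureTheory

/-- Chernoff step: if `E[e^{λZ}] ≤ e^A` then `P(Z > t) ≤ e^{A - λt}`. -/
lemma chernoff_aux {Ω : Type*} [MeasurableSpace Ω] (P : Measure Ω)
    (Z : Ω → ℝ) (hZ : Measurable Z) (lam t A : ℝ) (hl : 0 < lam)
    (hb : (∫⁻ ω, ENNReal.ofReal (Real.exp (lam * Z ω)) ∂P) ≤ ENNReal.ofReal (Real.exp A)) :
    P {ω | t < Z ω} ≤ ENNReal.ofReal (Real.exp (A - lam * t)) := by
  have hf : AEMeasurable (fun ω => ENNReal.ofReal (Real.exp (lam * Z ω))) P :=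
    ((measurable_const.mul hZ).exp.ennreal_ofReal).aemeasurable
  have markov := mul_meas_ge_le_lintegral₀ hf (ENNReal.ofReal (Real.exp (lam * t)))
  have hmono : P {ω | t < Z ω}
      ≤ P {ω | ENNReal.ofReal (Real.exp (lam * t)) ≤ ENNReal.ofReal (Real.exp (lam * Z ω))} := by
    apply measure_mono
    intro ω hω
    exact ENNReal.ofReal_le_ofReal (Real.exp_le_exp.2 (by nlinarith [Set.mem_setOf_eq ▸ hω]))
  have hne : ENNReal.ofReal (Real.exp (lam * t)) ≠ 0 :=
    ne_of_gt (ENNReal.ofReal_pos.2 (Real.exp_pos _))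
  have hnetop : ENNReal.ofReal (Real.exp (lam * t)) ≠ ⊤ := ENNReal.ofReal_ne_top
  have key : P {ω | t < Z ω} ≤ ENNReal.ofReal (Real.exp A) / ENNReal.ofReal (Real.exp (lam * t)) := by
    rw [ENNReal.le_div_iff_mul_le (Or.inl hne) (Or.inl hnetop), mul_comm]
    exact le_trans (mul_le_mul_right hmono _) (le_trans markov hb)
  calc P {ω | t < Z ω} ≤ _ := key
    _ = ENNReal.ofReal (Real.exp A / Real.exp (lam * t)) :=
        (ENNReal.ofReal_div_of_pos (Real.exp_pos _)).symm
    _ = ENNReal.ofReal (Real.exp (A - lam * t)) := by rw [Real.exp_sub]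

/-- Birgé–Massart type deviation inequality. If
`log E[e^{λZ}] ≤ vλ²/(1 − 2cλ)` for all `0 < λ < 1/(2c)` (stated equivalently as
`E[e^{λZ}] ≤ exp(vλ²/(1 − 2cλ))`, which in particular requires the exponential
moment to be finite), then `P(Z > 2cx + 2√(vx)) ≤ e^{−x}` for all `x > 0`. -/
theorem stmt_7 {Ω : Type*} [MeasurableSpace Ω] (P : Measure Ω) [IsProbabilityMeasure P]
    (Z : Ω → ℝ) (hZ : Measurable Z) (v c : ℝ) (hv : 0 ≤ v) (hc : 0 < c)
    (hmgf : ∀ lam : ℝ, 0 < lam → lam < 1 / (2 * c) →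
      (∫⁻ ω, ENNReal.ofReal (Real.exp (lam * Z ω)) ∂P)
        ≤ ENNReal.ofReal (Real.exp (v * lam ^ 2 / (1 - 2 * c * lam))))
    (x : ℝ) (hx : 0 < x) :
    P {ω | 2 * c * x + 2 * Real.sqrt (v * x) < Z ω} ≤ ENNReal.ofReal (Real.exp (-x)) := by
  set t : ℝ := 2 * c * x + 2 * Real.sqrt (v * x) with ht
  have key : ∀ lam : ℝ, 0 < lam → lam < 1 / (2 * c) →
      P {ω | t < Z ω} ≤ ENNReal.ofReal (Real.exp (v * lam ^ 2 / (1 - 2 * c * lam) - lam * t)) :=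
    fun lam h1 h2 => chernoff_aux P Z hZ lam t _ h1 (hmgf lam h1 h2)
  set b : ℝ := Real.sqrt x with hb
  have hbpos : 0 < b := Real.sqrt_pos.2 hx
  have hbsq : b ^ 2 = x := Real.sq_sqrt hx.le
  rcases eq_or_lt_of_le hv with hv0 | hvpos
  · -- v = 0 case: take λ → 1/(2c)
    have hv0 : v = 0 := hv0.symm
    have ht0 : t = 2 * c * x := by simp [ht, hv0]
    have hstep : ∀ lam ∈ Set.Ioo (0:ℝ) (1 / (2 * c)),
        P {ω | t < Z ω} ≤ ENNReal.ofReal (Real.exp (-(lam * (2 * c * x)))) := by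
      intro lam hlam
      have := key lam hlam.1 hlam.2
      simpa [hv0, ht0] using this
    have hlim : Filter.Tendsto (fun lam : ℝ => ENNReal.ofReal (Real.exp (-(lam * (2 * c * x)))))
        (nhdsWithin (1 / (2 * c)) (Set.Iio (1 / (2 * c)))) (nhds (ENNReal.ofReal (Real.exp (-x)))) := by
      have hcont : Continuous (fun lam : ℝ => ENNReal.ofReal (Real.exp (-(lam * (2 * c * x))))) :=
        ENNReal.continuous_ofReal.comp (Real.continuous_exp.comp (by continuity))
      have := (hcont.tendsto (1 / (2 * c))).mono_left
        (nhdsWithin_le_nhds (s := Set.Iio (1 / (2 * c))))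
      have heq : (1 / (2 * c)) * (2 * c * x) = x := by field_simp
      rwa [heq] at this
    have hev : ∀ᶠ lam in nhdsWithin (1 / (2 * c)) (Set.Iio (1 / (2 * c))),
        P {ω | t < Z ω} ≤ ENNReal.ofReal (Real.exp (-(lam * (2 * c * x)))) := by
      filter_upwards [Ioo_mem_nhdsLT_of_mem ⟨by positivity, le_refl _⟩] with lam hlam
      exact hstep lam hlam
    exact ge_of_tendsto hlim hev
  · -- v > 0 case
    set a : ℝ := Real.sqrt v with ha
    have hapos : 0 < a := Real.sqrt_pos.2 hvpos
    have hasq : a ^ 2 = v := Real.sq_sqrt hv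
    have hab : Real.sqrt (v * x) = a * b := Real.sqrt_mul hv x
    set lam : ℝ := b / (a + 2 * c * b) with hlam
    have hden : 0 < a + 2 * c * b := by positivity
    have hl1 : 0 < lam := div_pos hbpos hden
    have hl2 : lam < 1 / (2 * c) := by
      rw [div_lt_div_iff₀ hden (by positivity)]
      nlinarith
    have hcalc : v * lam ^ 2 / (1 - 2 * c * lam) - lam * t = -x := by
      have h1 : 1 - 2 * c * lam = a / (a + 2 * c * b) := by
        rw [hlam]
        field_simp
        ring
      rw [h1, ht, hab, ← hasq, ← hbsq, hlam]
      field_simp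
      ring
    have := key lam hl1 hl2
    rwa [hcalc] at this
end

section
/- Let g ∈ L²([0,1]) be real-valued. Then lim_{n→∞} (1/n) tr( T_n(g)² ) = ∫₀¹ g(ω)² dω. -/
open MeasureTheory Matrix Filter

/-- The `n×n` Toeplitz matrix of `g`, with entries
`[T_n(g)]_{t,t'} = ∫₀¹ e^{2πiω(t−t')} g(ω) dω`. -/
noncomputable def Toeplitz (n : ℕ) (g : ℝ → ℝ) : Matrix (Fin n) (Fin n) ℂ :=
  fun t t' => ∫ ω in Set.Icc (0:ℝ) 1,
    Complex.exp (2 * Real.pi * Complex.I * (ω : ℂ) * ((t.1 : ℂ) - (t'.1 : ℂ))) * (g ω : ℂ)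

noncomputable def tc (g : ℝ → ℝ) (k : ℤ) : ℂ :=
  ∫ ω in Set.Icc (0:ℝ) 1, Complex.exp (2 * Real.pi * Complex.I * (ω:ℂ) * (k:ℂ)) * (g ω : ℂ)

lemma toeplitz_apply (n : ℕ) (g : ℝ → ℝ) (t t' : Fin n) :
    Toeplitz n g t t' = tc g ((t.1 : ℤ) - (t'.1 : ℤ)) := by
  unfold Toeplitz tc
  congr 1 with ω
  congr 2
  push_cast
  ring

lemma tc_neg (g : ℝ → ℝ) (k : ℤ) : tc g (-k) = (starRingEnd ℂ) (tc g k) := by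
  unfold tc
  rw [← integral_conj]
  congr 1 with ω
  rw [_root_.map_mul, ← Complex.exp_conj]
  congr 2
  · simp only [_root_.map_mul, Complex.conj_I, Complex.conj_ofReal, map_ofNat, map_intCast]
    push_cast
    ring
  · simp [Complex.conj_ofReal]

lemma trace_sq (n : ℕ) (g : ℝ → ℝ) :
    (Toeplitz n g * Toeplitz n g).trace
      = ((∑ p : Fin n × Fin n, ‖tc g ((p.1.1 : ℤ) - (p.2.1 : ℤ))‖^2 : ℝ) : ℂ) := by
  rw [Matrix.trace, Fintype.sum_prod_type]
  push_cast
  apply Finset.sum_congr rfl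
  intro t _
  rw [Matrix.diag_apply, Matrix.mul_apply]
  apply Finset.sum_congr rfl
  intro t' _
  rw [toeplitz_apply, toeplitz_apply]
  have : ((t'.1 : ℤ) - t.1) = -((t.1 : ℤ) - t'.1) := by ring
  rw [this, tc_neg, Complex.mul_conj']

noncomputable def Npairs (n : ℕ) (k : ℤ) : ℕ :=
  (Finset.univ.filter (fun p : Fin n × Fin n => (p.1.1 : ℤ) - (p.2.1 : ℤ) = k)).card

lemma Npairs_le (n : ℕ) (k : ℤ) : Npairs n k ≤ n := by
  have := Finset.card_le_card_of_injOn (f := fun p : Fin n × Fin n => p.1)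
    (s := Finset.univ.filter (fun p : Fin n × Fin n => (p.1.1 : ℤ) - (p.2.1 : ℤ) = k))
    (t := Finset.univ) (fun p _ => Finset.mem_univ _) ?_
  · simpa [Npairs] using this
  · intro p hp q hq h
    simp only [Finset.coe_filter, Set.mem_setOf_eq] at hp hq
    simp only at h
    have h1 : (p.1.1 : ℤ) = q.1.1 := by rw [h]
    have h2 : (p.2.1 : ℤ) = q.2.1 := by omega
    have e1 : p.1 = q.1 := h
    have e2 : p.2 = q.2 := Fin.ext (by exact_mod_cast h2)
    exact Prod.ext e1 e2

lemma Npairs_ge (n : ℕ) (k : ℤ) : n - k.natAbs ≤ Npairs n k := by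
  rcases le_or_gt n k.natAbs with h | h
  · simp [Nat.sub_eq_zero_of_le h]
  set m := k.natAbs with hm
  have hn : 0 < n := lt_of_le_of_lt (Nat.zero_le _) h
  set f : ℕ → Fin n × Fin n := fun j => if 0 ≤ k then
      ((⟨(j + m) % n, Nat.mod_lt _ hn⟩ : Fin n), (⟨j % n, Nat.mod_lt _ hn⟩ : Fin n)) else
      ((⟨j % n, Nat.mod_lt _ hn⟩ : Fin n), (⟨(j + m) % n, Nat.mod_lt _ hn⟩ : Fin n)) with hfdef
  have hf : ∀ j ∈ Finset.range (n - m), f j ∈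
      Finset.univ.filter (fun p : Fin n × Fin n => (p.1.1 : ℤ) - (p.2.1 : ℤ) = k) := by
    intro j hj
    rw [Finset.mem_range] at hj
    have hj1 : (j + m) % n = j + m := Nat.mod_eq_of_lt (by omega)
    have hj2 : j % n = j := Nat.mod_eq_of_lt (by omega)
    rcases le_or_gt 0 k with hk | hk
    · simp only [hfdef, if_pos hk, Finset.mem_filter, Finset.mem_univ, true_and, hj1, hj2]
      have : (m : ℤ) = k := by omega
      push_cast; omega
    · simp only [hfdef, if_neg (not_le.2 hk), Finset.mem_filter, Finset.mem_univ, true_and,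
        hj1, hj2]
      have : (m : ℤ) = -k := by omega
      push_cast; omega
  have hcard := Finset.card_le_card_of_injOn _ hf ?_
  · simpa [Npairs] using hcard
  · intro a ha b hb hab
    rw [Finset.mem_coe, Finset.mem_range] at ha hb
    have ha2 : a % n = a := Nat.mod_eq_of_lt (by omega)
    have hb2 : b % n = b := Nat.mod_eq_of_lt (by omega)
    rcases le_or_gt 0 k with hk | hk
    · simp only [hfdef, if_pos hk] at hab
      have := congrArg (fun p : Fin n × Fin n => p.2.1) hab
      simpa [ha2, hb2] using this
    · simp only [hfdef, if_neg (not_le.2 hk)] at hab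
      have := congrArg (fun p : Fin n × Fin n => p.1.1) hab
      simpa [ha2, hb2] using this

lemma fiber_sum (n : ℕ) (h : ℤ → ℝ) :
    ∑' k : ℤ, (Npairs n k : ℝ) * h k
      = ∑ p : Fin n × Fin n, h ((p.1.1 : ℤ) - (p.2.1 : ℤ)) := by
  classical
  set d : Fin n × Fin n → ℤ := fun p => (p.1.1 : ℤ) - (p.2.1 : ℤ) with hd
  rw [tsum_eq_sum (s := Finset.univ.image d)]
  · rw [← Finset.sum_fiberwise_of_maps_to' (g := d) (t := Finset.univ.image d)
      (fun p _ => Finset.mem_image_of_mem d (Finset.mem_univ p)) h]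
    apply Finset.sum_congr rfl
    intro k _
    rw [Finset.sum_const, nsmul_eq_mul]
    rfl
  · intro k hk
    have : Npairs n k = 0 := by
      rw [Npairs, Finset.card_eq_zero, Finset.filter_eq_empty_iff]
      intro p _
      intro hp
      exact hk (Finset.mem_image.2 ⟨p, Finset.mem_univ p, hp⟩)
    simp [this]

lemma parseval (g : ℝ → ℝ) (hm : MeasureTheory.StronglyMeasurable g)
    (hg : MemLp g 2 (volume.restrict (Set.Icc (0:ℝ) 1))) :
    Summable (fun k : ℤ => ‖tc g k‖^2) ∧
      ∑' k : ℤ, ‖tc g k‖^2 = ∫ ω in Set.Icc (0:ℝ) 1, (g ω)^2 := by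
  haveI : Fact ((0:ℝ) < 1) := ⟨one_pos⟩
  set F : ℝ → ℂ := fun x => (g x : ℂ) with hF
  have hFmeas : Measurable F := Complex.measurable_ofReal.comp hm.measurable
  have hFmem : MemLp F 2 (volume.restrict (Set.Icc (0:ℝ) 1)) :=
    Complex.ofRealCLM.comp_memLp' hg
  have hFIoc : MemLp F 2 (volume.restrict (Set.Ioc (0:ℝ) 1)) :=
    hFmem.mono_measure (Measure.restrict_mono Set.Ioc_subset_Icc_self le_rfl)
  set fc : AddCircle (1:ℝ) → ℂ := AddCircle.liftIoc 1 0 F with hfc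
  have hfcmeas : Measurable fc := by
    have h1 : Measurable ((Set.Ioc (0:ℝ) (0+1)).restrict F) :=
      hFmeas.comp measurable_subtype_coe
    exact h1.comp (AddCircle.measurableEquivIoc 1 0).measurable
  have hcomp : (fun x : ℝ => fc x) =ᵐ[volume.restrict (Set.Ioc (0:ℝ) 1)] F := by
    filter_upwards [ae_restrict_mem measurableSet_Ioc] with x hx
    exact AddCircle.liftIoc_coe_apply (by simpa using hx)
  have hvol : (volume : Measure (AddCircle (1:ℝ))) = AddCircle.haarAddCircle := by
    rw [AddCircle.volume_eq_smul_haarAddCircle]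
    simp
  have hfcmem : MemLp fc 2 (AddCircle.haarAddCircle) := by
    rw [← hvol, ← (AddCircle.measurePreserving_mk 1 0).map_eq]
    refine (memLp_map_measure_iff hfcmeas.stronglyMeasurable.aestronglyMeasurable
      AddCircle.measurable_mk'.aemeasurable).2 ?_
    have : (0:ℝ) + 1 = 1 := zero_add 1
    rw [this]
    exact hFIoc.ae_eq hcomp.symm
  set fL := hfcmem.toLp fc with hfL
  have hcoe : (fL : AddCircle (1:ℝ) → ℂ) =ᵐ[AddCircle.haarAddCircle] fc := hfcmem.coeFn_toLp
  have hcoeff : ∀ nn : ℤ, fourierCoeff (fL : AddCircle (1:ℝ) → ℂ) nn = tc g (-nn) := by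
    intro nn
    have e1 : fourierCoeff (fL : AddCircle (1:ℝ) → ℂ) nn = fourierCoeff fc nn := by
      unfold fourierCoeff
      apply integral_congr_ae
      filter_upwards [hcoe] with t ht
      rw [ht]
    rw [e1, hfc, fourierCoeff_liftIoc_eq, fourierCoeffOn_eq_integral]
    have : (0:ℝ) + 1 - 0 = 1 := by norm_num
    rw [this]
    simp only [one_div, inv_one, one_smul]
    rw [zero_add, intervalIntegral.integral_of_le zero_le_one,
      ← MeasureTheory.integral_Icc_eq_integral_Ioc]
    unfold tc
    apply integral_congr_ae
    filter_upwards [] with x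
    rw [smul_eq_mul]
    congr 1
    rw [fourier_coe_apply]
    push_cast
    congr 1
    ring
  have hsummable : Summable (fun i : ℤ => ‖fourierCoeff (fL : AddCircle (1:ℝ) → ℂ) i‖^2) := by
    have h1 : Memℓp (fourierBasis.repr fL) 2 := lp.memℓp _
    have h2 := h1.summable (by norm_num : (0:ℝ) < (2:ENNReal).toReal)
    have : ∀ i : ℤ, ‖(fourierBasis.repr fL) i‖ ^ ((2:ENNReal).toReal)
        = ‖fourierCoeff (fL : AddCircle (1:ℝ) → ℂ) i‖^2 := by
      intro i
      rw [fourierBasis_repr]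
      norm_num
    exact (summable_congr this).1 h2
  have hsum2 : Summable (fun k : ℤ => ‖tc g k‖^2) := by
    have := ((Equiv.neg ℤ).summable_iff
      (f := fun i : ℤ => ‖fourierCoeff (fL : AddCircle (1:ℝ) → ℂ) i‖^2)).2 hsummable
    refine summable_congr (fun k => ?_) |>.1 this
    simp only [Function.comp_apply, Equiv.neg_apply]
    rw [hcoeff, neg_neg]
  refine ⟨hsum2, ?_⟩
  have e2 : ∑' k : ℤ, ‖tc g k‖^2
      = ∑' i : ℤ, ‖fourierCoeff (fL : AddCircle (1:ℝ) → ℂ) i‖^2 := by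
    rw [← (Equiv.neg ℤ).tsum_eq (f := fun i : ℤ => ‖fourierCoeff (fL : AddCircle (1:ℝ) → ℂ) i‖^2)]
    apply tsum_congr
    intro k
    simp only [Equiv.neg_apply]
    rw [hcoeff, neg_neg]
  rw [e2, tsum_sq_fourierCoeff]
  have e3 : ∫ t : AddCircle 1, ‖(fL : AddCircle (1:ℝ) → ℂ) t‖^2 ∂AddCircle.haarAddCircle
      = ∫ t : AddCircle 1, ‖fc t‖^2 ∂AddCircle.haarAddCircle := by
    apply integral_congr_ae
    filter_upwards [hcoe] with t ht
    rw [ht]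
  rw [e3, ← hvol]
  have e4 := AddCircle.integral_preimage 1 0 (fun t : AddCircle 1 => ‖fc t‖^2)
  rw [zero_add] at e4
  rw [← e4, MeasureTheory.integral_Icc_eq_integral_Ioc]
  apply integral_congr_ae
  filter_upwards [hcomp] with x hx
  rw [hx, hF]
  rw [Complex.norm_real, Real.norm_eq_abs, sq_abs]

theorem stmt_13_aux (g : ℝ → ℝ) (hm : MeasureTheory.StronglyMeasurable g)
    (hg : MemLp g 2 (volume.restrict (Set.Icc (0:ℝ) 1))) :
    Tendsto (fun n : ℕ => (1 / (n : ℂ)) * (Toeplitz n g * Toeplitz n g).trace)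
      atTop (nhds ((∫ ω in Set.Icc (0:ℝ) 1, (g ω)^2 : ℝ) : ℂ)) := by
  obtain ⟨hsummable, hparseval⟩ := parseval g hm hg
  set h : ℤ → ℝ := fun k => ‖tc g k‖^2 with hh
  have h_nonneg : ∀ k, 0 ≤ h k := fun k => sq_nonneg _
  have hle1 : ∀ (n : ℕ) (k : ℤ), (Npairs n k : ℝ) / n ≤ 1 := by
    intro n k
    rcases Nat.eq_zero_or_pos n with rfl | hn
    · simp
    · rw [div_le_one (by exact_mod_cast hn)]
      exact_mod_cast Npairs_le n k
  have hreal : Tendsto (fun n : ℕ => ∑' k : ℤ, ((Npairs n k : ℝ) / n) * h k) atTop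
      (nhds (∑' k, h k)) := by
    apply tendsto_tsum_of_dominated_convergence hsummable
    · intro k
      have h1 : Tendsto (fun n : ℕ => (Npairs n k : ℝ) / n) atTop (nhds 1) := by
        apply tendsto_of_tendsto_of_tendsto_of_le_of_le'
          (g := fun n : ℕ => 1 - (k.natAbs : ℝ)/n) (h := fun _ => (1:ℝ))
        · have h2 := tendsto_const_div_atTop_nhds_zero_nat (k.natAbs : ℝ)
          have h3 : Tendsto (fun _ : ℕ => (1:ℝ)) atTop (nhds 1) := tendsto_const_nhds
          simpa using h3.sub h2
        · exact tendsto_const_nhds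
        · filter_upwards [eventually_ge_atTop (k.natAbs + 1)] with n hn
          have hn0 : 0 < n := by omega
          have hmn : k.natAbs ≤ n := by omega
          have hnpos : (0:ℝ) < n := by exact_mod_cast hn0
          have hN : ((n : ℝ) - k.natAbs) ≤ (Npairs n k : ℝ) := by
            have h5 : ((n - k.natAbs : ℕ) : ℝ) ≤ Npairs n k := by
              exact_mod_cast Npairs_ge n k
            rwa [Nat.cast_sub hmn] at h5
          have h4 : ((n:ℝ) - k.natAbs)/n ≤ (Npairs n k:ℝ)/n :=
            (div_le_div_iff_of_pos_right hnpos).2 hN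
          rwa [sub_div, div_self (ne_of_gt hnpos)] at h4
        · filter_upwards [] with n
          exact hle1 n k
      have := h1.mul_const (h k)
      rwa [one_mul] at this
    · filter_upwards [] with n
      intro k
      rw [Real.norm_eq_abs, abs_of_nonneg (mul_nonneg (div_nonneg (by positivity)
        (Nat.cast_nonneg n)) (h_nonneg k))]
      calc ((Npairs n k : ℝ)/n) * h k ≤ 1 * h k :=
            mul_le_mul_of_nonneg_right (hle1 n k) (h_nonneg k)
        _ = h k := one_mul _
  have heq : ∀ n : ℕ, (1/(n:ℂ)) * (Toeplitz n g * Toeplitz n g).trace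
      = ((∑' k : ℤ, ((Npairs n k : ℝ)/n) * h k : ℝ) : ℂ) := by
    intro n
    rw [trace_sq]
    have e1 : ∑' k : ℤ, ((Npairs n k:ℝ)/n) * h k
        = (∑' k : ℤ, (Npairs n k:ℝ) * h k)/n := by
      rw [← tsum_div_const]
      apply tsum_congr; intro k; ring
    rw [e1, fiber_sum]
    simp only [hh]
    push_cast
    ring
  simp only [heq]
  rw [← hparseval]
  exact (Complex.continuous_ofReal.tendsto _).comp hreal

/-- for real-valued `g ∈ L²([0,1])`,
`lim_{n→∞} (1/n) tr(T_n(g)²) = ∫₀¹ g(ω)² dω`. -/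
theorem stmt_13 (g : ℝ → ℝ)
    (hg : MemLp g 2 (volume.restrict (Set.Icc (0:ℝ) 1))) :
    Tendsto (fun n : ℕ => (1 / (n : ℂ)) * (Toeplitz n g * Toeplitz n g).trace)
      atTop (nhds ((∫ ω in Set.Icc (0:ℝ) 1, (g ω)^2 : ℝ) : ℂ)) := by
  have hae : g =ᵐ[volume.restrict (Set.Icc (0:ℝ) 1)] hg.1.mk g := hg.1.ae_eq_mk
  have hsm : MeasureTheory.StronglyMeasurable (hg.1.mk g) := hg.1.stronglyMeasurable_mk
  have hg2 : MemLp (hg.1.mk g) 2 (volume.restrict (Set.Icc (0:ℝ) 1)) := hg.ae_eq hae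
  have hT : ∀ n, Toeplitz n g = Toeplitz n (hg.1.mk g) := by
    intro n; funext t t'
    unfold Toeplitz
    apply integral_congr_ae
    filter_upwards [hae] with ω hω
    rw [hω]
  have hI : (∫ ω in Set.Icc (0:ℝ) 1, (g ω)^2) = ∫ ω in Set.Icc (0:ℝ) 1, (hg.1.mk g ω)^2 := by
    apply integral_congr_ae
    filter_upwards [hae] with ω hω
    rw [hω]
  simp only [hT, hI]
  exact stmt_13_aux (hg.1.mk g) hsm hg2
end

section
/- For all real numbers b, b̂ and every ξ > 0, the following pointwise thresholding inequality holds: (b̂ − b)²·1{|b̂| > ξ} + b²·1{|b̂| ≤ ξ} ≤ (b̂ − b)²·1{|b| > ξ/2} + b²·1{|b| ≤ 2ξ} + 5·(b̂ − b)²·1{|b̂ − b| > ξ/2}. -/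
/-- pointwise thresholding inequality. For all reals `b, b̂` and
`ξ > 0`:
`(b̂ − b)²·1{|b̂| > ξ} + b²·1{|b̂| ≤ ξ}
  ≤ (b̂ − b)²·1{|b| > ξ/2} + b²·1{|b| ≤ 2ξ} + 5(b̂ − b)²·1{|b̂ − b| > ξ/2}`. -/
theorem stmt_16 (b bh ξ : ℝ) (hξ : 0 < ξ) :
    (bh - b)^2 * (if ξ < |bh| then (1:ℝ) else 0)
      + b^2 * (if |bh| ≤ ξ then (1:ℝ) else 0)
    ≤ (bh - b)^2 * (if ξ / 2 < |b| then (1:ℝ) else 0)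
      + b^2 * (if |b| ≤ 2 * ξ then (1:ℝ) else 0)
      + 5 * ((bh - b)^2 * (if ξ / 2 < |bh - b| then (1:ℝ) else 0)) := by
  have hd1 : |bh| - |b| ≤ |bh - b| := abs_sub_abs_le_abs_sub bh b
  have hd2 : |b| - |bh| ≤ |bh - b| := by
    have := abs_sub_abs_le_abs_sub b bh
    rwa [abs_sub_comm b bh] at this
  have hs1 : (bh - b)^2 = |bh - b|^2 := (sq_abs _).symm
  have hs2 : b^2 = |b|^2 := (sq_abs _).symm
  have hab : (0:ℝ) ≤ |b| := abs_nonneg _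
  have had : (0:ℝ) ≤ |bh - b| := abs_nonneg _
  by_cases H1 : ξ < |bh|
  · rw [if_pos H1, if_neg (not_le.mpr H1)]
    by_cases H2 : ξ / 2 < |b|
    · rw [if_pos H2]
      split_ifs <;> nlinarith [sq_nonneg (bh - b), sq_nonneg b]
    · push_neg at H2
      rw [if_neg (not_lt.mpr H2)]
      have hd : ξ / 2 < |bh - b| := by linarith
      rw [if_pos hd, if_pos (by linarith : |b| ≤ 2 * ξ)]
      nlinarith [sq_nonneg b]
  · push_neg at H1
    rw [if_neg (not_lt.mpr H1), if_pos H1]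
    by_cases H3 : |b| ≤ 2 * ξ
    · rw [if_pos H3]
      split_ifs <;> nlinarith [sq_nonneg (bh - b)]
    · push_neg at H3
      rw [if_neg (not_le.mpr H3)]
      have hd : ξ < |bh - b| := by linarith
      rw [if_pos (by linarith : ξ / 2 < |bh - b|), if_pos (by linarith : ξ / 2 < |b|)]
      nlinarith
end
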